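/- Suppose the presentation ⟨X|R⟩ is side-confluent, and let φ : K⟨X⟩ → K⟨X⟩ be the linear map sending each element to its unique normal form. Then for all integers n ≥ 0 and m ≥ l_N(n), the operator φ|_{V^{⊗m−l_N(n)}} ⊗ id_{V^{⊗l_N(n)}} is a reduction operator relative to X^(m) whose kernel equals I(R)_{m−l_N(n)} ⊗ V^{⊗l_N(n)}; hence it equals F_1^{n,m}. In particular (case n = 0), the restriction of φ to V^{⊗m} is a reduction operator relative to X^(m) with kernel I(R)_m. -/

import Mathlib

open scoped TensorProduct
set_option linter.unusedSectionVars false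

def altProd {A : Type*} [Monoid A] (t s : A) (k : ℕ) : A :=
  if Even k then (t * s) ^ (k / 2) else s * (t * s) ^ (k / 2)

namespace CC

variable (K : Type*) [Field K] (X : Type*) [Fintype X] [LinearOrder X]

abbrev F : Type _ := MonoidAlgebra K (FreeMonoid X)

noncomputable def wd (w : FreeMonoid X) : F K X := MonoidAlgebra.of K (FreeMonoid X) w

def wlen (w : FreeMonoid X) : ℕ := (FreeMonoid.toList w).length

noncomputable instance : LinearOrder (FreeMonoid X) :=
  LinearOrder.lift' (fun w => FreeMonoid.toList w) (fun _ _ h => FreeMonoid.toList.injective h)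

noncomputable def lm (f : F K X) : FreeMonoid X := WithBot.unbotD 1 (f.coeff.support.max)

/-- The homogeneous component `V^{⊗m} = KX^{(m)}` of `K⟨X⟩`:
elements supported on words of length `m`. -/
noncomputable def degSub (m : ℕ) : Submodule K (F K X) where
  carrier := {f | ∀ w ∈ f.coeff.support, wlen X w = m}
  add_mem' := by
    intro a b ha hb w hw
    rcases Finset.mem_union.mp (Finsupp.support_add hw) with h | h
    · exact ha w h
    · exact hb w h
  zero_mem' := by intro w hw; simp at hw
  smul_mem' := by intro c f hf w hw; exact hf w (Finsupp.support_smul hw)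

lemma mem_degSub {m : ℕ} {f : F K X} :
    f ∈ degSub K X m ↔ ∀ w ∈ f.coeff.support, wlen X w = m := Iff.rfl

/-- `l_N(2k) = kN`, `l_N(2k+1) = kN + 1`. -/
def lN (N n : ℕ) : ℕ := if Even n then (n / 2) * N else (n / 2) * N + 1

/-- The homogeneous component `I(R)_m` of the two-sided ideal generated by `R`:
`I(R)_m = Σ_{i=0}^{m−N} V^{⊗i}·R̄·V^{⊗m−N−i}` for `m ≥ N` and `I(R)_m = 0` for `m < N`. -/
noncomputable def idealPiece (N : ℕ) (R : Set (F K X)) (m : ℕ) : Submodule K (F K X) :=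
  if m < N then ⊥
  else ⨆ i ∈ Finset.range (m - N + 1),
    degSub K X i * Submodule.span K R * degSub K X (m - N - i)

/-- The two-sided ideal `I(R)` of `K⟨X⟩` generated by `R`, as a `K`-subspace. -/
noncomputable def idealSpan (R : Set (F K X)) : Submodule K (F K X) :=
  Submodule.span K {x | ∃ u v : FreeMonoid X, ∃ g ∈ R, x = wd K X u * g * wd K X v}

/-- `J_0 = K`, `J_1 = V`, and `J_n = ⋂_{i=0}^{l_N(n)−N} V^{⊗i}·R̄·V^{⊗l_N(n)−N−i}` for `n ≥ 2`. -/
noncomputable def Jspace (N : ℕ) (R : Set (F K X)) : ℕ → Submodule K (F K X)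
  | 0 => degSub K X 0
  | 1 => degSub K X 1
  | (n + 2) => ⨅ i ∈ Finset.range (lN N (n + 2) - N + 1),
      degSub K X i * Submodule.span K R * degSub K X (lN N (n + 2) - N - i)

open Classical in
/-- The reduction `r_{u·g·v}` of the presentation `⟨X|R⟩`: the linear endomorphism of `K⟨X⟩`
fixing every word other than `u·lm(g)·v` and sending `u·lm(g)·v` to `u·(lm(g)−g)·v`. -/
noncomputable def redMap (u : FreeMonoid X) (g : F K X) (v : FreeMonoid X) :
    F K X →ₗ[K] F K X :=
  Finsupp.linearCombination K (fun w : FreeMonoid X =>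
    if w = u * lm K X g * v then wd K X u * (wd K X (lm K X g) - g) * wd K X v
    else wd K X w) ∘ₗ
    ((MonoidAlgebra.coeffLinearEquiv (R := K) : F K X ≃ₗ[K] (FreeMonoid X →₀ K)).toLinearMap)

/-- `f` is a normal form for `⟨X|R⟩` if it is fixed by every reduction. -/
def IsNormalForm (R : Set (F K X)) (f : F K X) : Prop :=
  ∀ u v : FreeMonoid X, ∀ g ∈ R, redMap K X u g v f = f

/-- `g` is a normal form of `f`: `g` is a normal form and is obtained from `f` by applying a
finite sequence of reductions of `⟨X|R⟩`. -/
def NormalFormOf (R : Set (F K X)) (f g : F K X) : Prop :=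
  IsNormalForm K X R g ∧
    ∃ L : List (FreeMonoid X × F K X × FreeMonoid X),
      (∀ p ∈ L, p.2.1 ∈ R) ∧
      g = L.foldr (fun p h => redMap K X p.1 p.2.1 p.2.2 h) f

/-- The presentation `⟨X|R⟩` is reduced: for every `f ∈ R`, `lm(f) − f` is a normal form for
`⟨X|R⟩` and `lm(f)` is a normal form for `⟨X | R∖{f}⟩`. -/
def Reduced (R : Set (F K X)) : Prop :=
  ∀ f ∈ R, IsNormalForm K X R (wd K X (lm K X f) - f) ∧
    IsNormalForm K X (R \ {f}) (wd K X (lm K X f))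

/-- `R` consists of `N`-homogeneous elements with leading coefficient `1`. -/
def NHomogLC1 (N : ℕ) (R : Set (F K X)) : Prop :=
  ∀ f ∈ R, f ∈ degSub K X N ∧ f.coeff (lm K X f) = 1

open Classical in
/-- The operator `S` of the presentation `⟨X|R⟩`: the endomorphism of `V^{⊗N}` sending `lm(f)`
to `lm(f) − f` for every `f ∈ R` and fixing all other words (extended by the identity on words
of other lengths). -/
noncomputable def Sop (R : Set (F K X)) : F K X →ₗ[K] F K X :=
  Finsupp.linearCombination K (fun w : FreeMonoid X =>
    if h : ∃ f ∈ R, lm K X f = w then wd K X w - h.choose else wd K X w) ∘ₗ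
    ((MonoidAlgebra.coeffLinearEquiv (R := K) : F K X ≃ₗ[K] (FreeMonoid X →₀ K)).toLinearMap)

/-- `S ⊗ id_{V^{⊗b}}` realized on `K⟨X⟩`: on a word of length `a + b`, apply `S` to the first
`a` letters and the identity to the last `b` letters; the identity on all other words. -/
noncomputable def applyLeft (S : F K X →ₗ[K] F K X) (a b : ℕ) : F K X →ₗ[K] F K X :=
  Finsupp.linearCombination K (fun w : FreeMonoid X =>
    if wlen X w = a + b then
      S (wd K X (FreeMonoid.ofList ((FreeMonoid.toList w).take a))) *
        wd K X (FreeMonoid.ofList ((FreeMonoid.toList w).drop a))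
    else wd K X w) ∘ₗ
    ((MonoidAlgebra.coeffLinearEquiv (R := K) : F K X ≃ₗ[K] (FreeMonoid X →₀ K)).toLinearMap)

/-- `id_{V^{⊗a}} ⊗ S` realized on `K⟨X⟩`: on a word of length `a + b`, apply the identity to
the first `a` letters and `S` to the last `b` letters; the identity on all other words. -/
noncomputable def applyRight (S : F K X →ₗ[K] F K X) (a b : ℕ) : F K X →ₗ[K] F K X :=
  Finsupp.linearCombination K (fun w : FreeMonoid X =>
    if wlen X w = a + b then
      wd K X (FreeMonoid.ofList ((FreeMonoid.toList w).take a)) *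
        S (wd K X (FreeMonoid.ofList ((FreeMonoid.toList w).drop a)))
    else wd K X w) ∘ₗ
    ((MonoidAlgebra.coeffLinearEquiv (R := K) : F K X ≃ₗ[K] (FreeMonoid X →₀ K)).toLinearMap)

/-- The presentation `⟨X|R⟩` is side-confluent: for every `1 ≤ m ≤ N−1` there exists `k ≥ 1`
with `⟨id_{V^{⊗m}}⊗S, S⊗id_{V^{⊗m}}⟩^k = ⟨S⊗id_{V^{⊗m}}, id_{V^{⊗m}}⊗S⟩^k` on `V^{⊗N+m}`. -/
def SideConfluent (N : ℕ) (R : Set (F K X)) : Prop :=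
  ∀ m : ℕ, 1 ≤ m → m ≤ N - 1 →
    ∃ k : ℕ, 1 ≤ k ∧
      ∀ f ∈ degSub K X (N + m),
        altProd (applyRight K X (Sop K X R) m N) (applyLeft K X (Sop K X R) N m) k f =
          altProd (applyLeft K X (Sop K X R) N m) (applyRight K X (Sop K X R) m N) k f

/-- The extra-condition: `(V^{⊗n}⊗R̄) ∩ (R̄⊗V^{⊗n}) ⊆ V^{⊗n−1}⊗R̄⊗V` for every `2 ≤ n ≤ N−1`. -/
def ExtraCondition (N : ℕ) (R : Set (F K X)) : Prop :=
  ∀ n : ℕ, 2 ≤ n → n ≤ N - 1 →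
    (degSub K X n * Submodule.span K R) ⊓ (Submodule.span K R * degSub K X n) ≤
      degSub K X (n - 1) * Submodule.span K R * degSub K X 1

/-- A reduction operator relative to `X^{(m)}`, realized as a linear endomorphism of `K⟨X⟩`
extended by the identity outside of `V^{⊗m}`: an idempotent operator fixing each word of
length `m` or mapping it to an element of `V^{⊗m}` all of whose monomials are strictly
smaller. -/
structure IsRedOp (m : ℕ) (T : F K X →ₗ[K] F K X) : Prop where
  idem : T ∘ₗ T = T
  le : ∀ w : FreeMonoid X, wlen X w = m →
    T (wd K X w) = wd K X w ∨
      (T (wd K X w) ∈ degSub K X m ∧ ∀ u ∈ (T (wd K X w)).coeff.support, u < w)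
  other : ∀ w : FreeMonoid X, wlen X w ≠ m → T (wd K X w) = wd K X w

/-- The kernel `I(R)_{m−l_N(n)} ⊗ V^{⊗l_N(n)}` of the reduction operator `F_1^{n,m}`. -/
noncomputable def ker1 (N : ℕ) (R : Set (F K X)) (n m : ℕ) : Submodule K (F K X) :=
  idealPiece K X N R (m - lN N n) * degSub K X (lN N n)

/-- The kernel of the reduction operator `F_2^{n,m}`: `⊥` if `m < l_N(n+1)` (so that
`F_2^{n,m} = id`), and `V^{⊗m−l_N(n+1)} ⊗ J_{n+1}` otherwise. -/
noncomputable def ker2 (N : ℕ) (R : Set (F K X)) (n m : ℕ) : Submodule K (F K X) :=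
  if m < lN N (n + 1) then ⊥
  else degSub K X (m - lN N (n + 1)) * Jspace K X N R (n + 1)

/-- The span of the normal words of length `d`, i.e. `φ(V^{⊗d})` where `φ` is the
normal-form map. -/
noncomputable def nfSub (R : Set (F K X)) (d : ℕ) : Submodule K (F K X) :=
  Submodule.span K
    {x | ∃ w : FreeMonoid X, wlen X w = d ∧ IsNormalForm K X R (wd K X w) ∧ x = wd K X w}

/-- `Γ = (id − T2)·Σ_{i odd, 1 ≤ i ≤ k−1} ⟨T2,T1⟩^i`, the image of the element `γ1` of the
confluence algebra under the `(T1,T2)`-representation. -/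
noncomputable def Gamma (T1 T2 : F K X →ₗ[K] F K X) (k : ℕ) : F K X →ₗ[K] F K X :=
  (1 - T2) * ∑ i ∈ (Finset.Icc 1 (k - 1)).filter (fun i => Odd i), altProd T2 T1 i

end CC


namespace CC

variable {K : Type*} [Field K] {X : Type*} [Fintype X] [LinearOrder X]

lemma wd_def (w : FreeMonoid X) : wd K X w = MonoidAlgebra.single w 1 := rfl

lemma wd_coeff (w : FreeMonoid X) : (wd K X w).coeff = Finsupp.single w 1 := rfl

lemma wd_mul (u v : FreeMonoid X) : wd K X u * wd K X v = wd K X (u * v) :=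
  (map_mul (MonoidAlgebra.of K (FreeMonoid X)) u v).symm

lemma wd_one : wd K X 1 = 1 := map_one (MonoidAlgebra.of K (FreeMonoid X))

lemma wd_apply (w x : FreeMonoid X) : (wd K X w).coeff x = if x = w then (1:K) else 0 := by
  rw [wd_coeff, Finsupp.single_apply]
  simp [eq_comm]

lemma supp_wd (w : FreeMonoid X) : (wd K X w).coeff.support = {w} := by
  rw [wd_coeff]; exact Finsupp.support_single_ne_zero w one_ne_zero

lemma wlen_mul (u v : FreeMonoid X) : wlen X (u * v) = wlen X u + wlen X v := by
  simp [wlen, FreeMonoid.toList_mul]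

lemma wd_mem_degSub {w : FreeMonoid X} {d : ℕ} (h : wlen X w = d) :
    wd K X w ∈ degSub K X d := by
  intro x hx
  rw [supp_wd] at hx
  rwa [Finset.mem_singleton.mp hx]

lemma conj_inj {X : Type*} (u v : FreeMonoid X) :
    Function.Injective (fun x : FreeMonoid X => u * x * v) := by
  intro x y h
  simp only [] at h
  exact mul_left_cancel (mul_right_cancel h)

lemma conj_eq (u v : FreeMonoid X) (g : F K X) :
    (wd K X u * g * wd K X v).coeff = Finsupp.mapDomain (fun x => u * x * v) g.coeff := by
  induction g using MonoidAlgebra.induction_linear with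
  | zero => simp
  | add f h hf hh =>
      rw [mul_add, add_mul, MonoidAlgebra.coeff_add, MonoidAlgebra.coeff_add,
        Finsupp.mapDomain_add, hf, hh]
  | single x c =>
      rw [wd_def, wd_def, MonoidAlgebra.single_mul_single, MonoidAlgebra.single_mul_single,
        MonoidAlgebra.coeff_single, MonoidAlgebra.coeff_single, Finsupp.mapDomain_single]
      simp

lemma conj_support (u v : FreeMonoid X) (g : F K X) :
    (wd K X u * g * wd K X v).coeff.support = g.coeff.support.image (fun x => u * x * v) := by
  rw [conj_eq]
  exact Finsupp.mapDomain_support_of_injective (conj_inj u v) g.coeff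

lemma conj_apply (u v : FreeMonoid X) (g : F K X) (x : FreeMonoid X) :
    (wd K X u * g * wd K X v).coeff (u * x * v) = g.coeff x := by
  rw [conj_eq]
  exact Finsupp.mapDomain_apply (conj_inj u v) g.coeff x

lemma conj_eq_zero_iff {u v : FreeMonoid X} {g : F K X} :
    wd K X u * g * wd K X v = 0 ↔ g = 0 := by
  rw [← MonoidAlgebra.coeff_eq_zero, conj_eq]
  constructor
  · intro h
    exact MonoidAlgebra.coeff_eq_zero.mp
      (Finsupp.mapDomain_injective (conj_inj u v) (by simpa using h))
  · intro h; simp [h]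

lemma conj_mem_degSub {u v : FreeMonoid X} {g : F K X} {N : ℕ} (hg : g ∈ degSub K X N) :
    wd K X u * g * wd K X v ∈ degSub K X (wlen X u + N + wlen X v) := by
  intro x hx
  rw [conj_support] at hx
  obtain ⟨y, hy, rfl⟩ := Finset.mem_image.mp hx
  rw [wlen_mul, wlen_mul, hg y hy]

lemma mul_mem_degSub {f g : F K X} {i j : ℕ} (hf : f ∈ degSub K X i) (hg : g ∈ degSub K X j) :
    f * g ∈ degSub K X (i + j) := by
  classical
  intro x hx
  have hmem := MonoidAlgebra.support_coeff_mul_subset f g hx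
  rw [Finset.mem_mul] at hmem
  obtain ⟨u, hu, v, hv, rfl⟩ := hmem
  rw [wlen_mul, hf u hu, hg v hv]

lemma F_eq_sum (f : F K X) : f = f.coeff.sum fun w c => c • wd K X w := by
  apply MonoidAlgebra.coeff_injective
  rw [MonoidAlgebra.coeff_finsuppSum]
  conv_lhs => rw [← Finsupp.sum_single f.coeff]
  apply Finsupp.sum_congr
  intro w _
  rw [MonoidAlgebra.coeff_smul, wd_coeff, Finsupp.smul_single, smul_eq_mul, mul_one]

lemma mem_span_words {f : F K X} {P : FreeMonoid X → Prop}
    (h : ∀ x ∈ f.coeff.support, P x) :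
    f ∈ Submodule.span K {y | ∃ w, P w ∧ y = wd K X w} := by
  rw [F_eq_sum f]
  apply Submodule.sum_mem
  intro w hw
  exact Submodule.smul_mem _ _ (Submodule.subset_span ⟨w, h w hw, rfl⟩)

lemma degSub_eq_span (d : ℕ) :
    degSub K X d = Submodule.span K {y | ∃ w, wlen X w = d ∧ y = wd K X w} := by
  apply le_antisymm
  · intro f hf
    exact mem_span_words hf
  · rw [Submodule.span_le]
    rintro y ⟨w, hw, rfl⟩
    exact wd_mem_degSub hw

lemma lc_wd (φ : FreeMonoid X → F K X) (w : FreeMonoid X) :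
    (Finsupp.linearCombination K φ ∘ₗ
      ((MonoidAlgebra.coeffLinearEquiv (R := K) : F K X ≃ₗ[K] (FreeMonoid X →₀ K)).toLinearMap))
      (wd K X w) = φ w := by
  show Finsupp.linearCombination K φ (Finsupp.single w 1) = φ w
  rw [Finsupp.linearCombination_single, one_smul]

end CC

namespace CC

variable {K : Type*} [Field K] {X : Type*} [Fintype X] [LinearOrder X]

section Order

lemma lex_append {x y : List X} (h : List.Lex (· < ·) x y) (hl : x.length = y.length)
    (b c : List X) : List.Lex (· < ·) (x ++ b) (y ++ c) := by
  induction h generalizing b c with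
  | nil => simp at hl
  | @rel a l₁ a' l₂ hr => exact List.Lex.rel hr
  | @cons a l₁ l₂ h ih =>
      exact List.Lex.cons (ih (by simpa using hl) b c)

lemma lex_prefix (a : List X) {x y : List X} (h : List.Lex (· < ·) x y) :
    List.Lex (· < ·) (a ++ x) (a ++ y) := by
  induction a with
  | nil => exact h
  | cons hd tl ih => exact List.Lex.cons ih

lemma freeMonoid_lt_def {x y : FreeMonoid X} :
    x < y ↔ List.Lex (· < ·) (FreeMonoid.toList x) (FreeMonoid.toList y) := Iff.rfl

lemma mul_lt_mul_words {x y : FreeMonoid X} (h : x < y) (hl : wlen X x = wlen X y)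
    (u v v' : FreeMonoid X) : u * x * v < u * y * v' := by
  rw [freeMonoid_lt_def] at h ⊢
  simp only [FreeMonoid.toList_mul]
  rw [List.append_assoc, List.append_assoc]
  exact lex_prefix _ (lex_append h hl _ _)

lemma mul_le_mul_words {x y : FreeMonoid X} (h : x ≤ y) (hl : wlen X x = wlen X y)
    (u v : FreeMonoid X) : u * x * v ≤ u * y * v := by
  rcases eq_or_lt_of_le h with rfl | h
  · exact le_refl _
  · exact le_of_lt (mul_lt_mul_words h hl u v v)

end Order

section Lm

variable {N : ℕ} {R : Set (F K X)}

lemma lm_mem {g : F K X} (hg : g ≠ 0) : lm K X g ∈ g.coeff.support := by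
  obtain ⟨m, hm⟩ := Finset.max_of_nonempty (Finsupp.support_nonempty_iff.mpr (MonoidAlgebra.coeff_eq_zero.not.mpr hg))
  have : lm K X g = m := by rw [lm, hm]; rfl
  rw [this]
  exact Finset.mem_of_max hm

lemma le_lm {g : F K X} {x : FreeMonoid X} (hx : x ∈ g.coeff.support) : x ≤ lm K X g := by
  have hg : g ≠ 0 := by rintro rfl; simp at hx
  obtain ⟨m, hm⟩ := Finset.max_of_nonempty (Finsupp.support_nonempty_iff.mpr (MonoidAlgebra.coeff_eq_zero.not.mpr hg))
  have h1 : lm K X g = m := by rw [lm, hm]; rfl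
  have := Finset.le_max hx
  rw [hm] at this
  rw [h1]
  exact_mod_cast this

lemma R_ne_zero (hhom : NHomogLC1 K X N R) {g : F K X} (hg : g ∈ R) : g ≠ 0 := by
  intro h
  have := (hhom g hg).2
  rw [h] at this
  simp at this

lemma lm_mem_R (hhom : NHomogLC1 K X N R) {g : F K X} (hg : g ∈ R) :
    lm K X g ∈ g.coeff.support := lm_mem (R_ne_zero hhom hg)

lemma wlen_lm (hhom : NHomogLC1 K X N R) {g : F K X} (hg : g ∈ R) :
    wlen X (lm K X g) = N := (hhom g hg).1 _ (lm_mem_R hhom hg)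

lemma lc_one (hhom : NHomogLC1 K X N R) {g : F K X} (hg : g ∈ R) :
    g.coeff (lm K X g) = 1 := (hhom g hg).2

/-- support of `lm g − g` consists of words `< lm g` of length `N`. -/
lemma tail_supp (hhom : NHomogLC1 K X N R) {g : F K X} (hg : g ∈ R) :
    ∀ x ∈ (wd K X (lm K X g) - g).coeff.support, x < lm K X g ∧ wlen X x = N := by
  intro x hx
  have hxne : (wd K X (lm K X g) - g).coeff x ≠ 0 := Finsupp.mem_support_iff.mp hx
  have hxl : x ≠ lm K X g := by
    rintro rfl
    apply hxne
    rw [MonoidAlgebra.coeff_sub, Finsupp.sub_apply, wd_apply, if_pos rfl, lc_one hhom hg, sub_self]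
  have hxg : x ∈ g.coeff.support := by
    by_contra h
    apply hxne
    rw [MonoidAlgebra.coeff_sub, Finsupp.sub_apply, wd_apply, if_neg hxl, Finsupp.notMem_support_iff.mp h, sub_zero]
  exact ⟨lt_of_le_of_ne (le_lm hxg) hxl, (hhom g hg).1 x hxg⟩

lemma redMap_apply (u : FreeMonoid X) (g : F K X) (v : FreeMonoid X) (f : F K X) :
    redMap K X u g v f =
      f - f.coeff (u * lm K X g * v) • (wd K X u * g * wd K X v) := by
  induction f using MonoidAlgebra.induction_linear with
  | zero => simp
  | add f h hf hh =>
      rw [map_add, hf, hh, MonoidAlgebra.coeff_add, Finsupp.add_apply, add_smul]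
      module
  | single x c =>
      have hs : (MonoidAlgebra.single x c : F K X) = c • wd K X x := by
        rw [wd_def, MonoidAlgebra.smul_single, smul_eq_mul, mul_one]
      rw [hs, map_smul, redMap, lc_wd, MonoidAlgebra.coeff_smul, Finsupp.smul_apply, wd_apply,
        smul_eq_mul]
      by_cases hx : x = u * lm K X g * v
      · subst hx
        rw [if_pos rfl, if_pos rfl, mul_one]
        have h1 : wd K X (u * lm K X g * v) = wd K X u * wd K X (lm K X g) * wd K X v := by
          rw [wd_mul, wd_mul]
        rw [h1, mul_sub, sub_mul, smul_sub]
      · rw [if_neg hx, if_neg (fun h => hx h.symm), mul_zero, zero_smul, sub_zero]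

lemma lm_inj (hhom : NHomogLC1 K X N R) (hred : Reduced K X R)
    {f g : F K X} (hf : f ∈ R) (hg : g ∈ R) (h : lm K X f = lm K X g) : f = g := by
  by_contra hne
  have h2 := (hred g hg).2 1 1 f ⟨hf, by simp [hne]⟩
  rw [redMap_apply] at h2
  rw [one_mul, mul_one, h, wd_apply, if_pos rfl, one_smul] at h2
  rw [wd_one, one_mul, mul_one] at h2
  exact R_ne_zero hhom hf (sub_eq_self.mp h2)

end Lm

end CC

namespace CC

variable {K : Type*} [Field K] {X : Type*} [Fintype X] [LinearOrder X]
variable {N : ℕ} {R : Set (F K X)}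

lemma isNormalForm_iff (hhom : NHomogLC1 K X N R) {f : F K X} :
    IsNormalForm K X R f ↔ ∀ u v : FreeMonoid X, ∀ g ∈ R, f.coeff (u * lm K X g * v) = 0 := by
  constructor
  · intro h u v g hg
    have := h u v g hg
    rw [redMap_apply] at this
    have h2 : f.coeff (u * lm K X g * v) • (wd K X u * g * wd K X v) = 0 := by
      have := sub_eq_self.mp this
      exact this
    rcases smul_eq_zero.mp h2 with h3 | h3
    · exact h3
    · exact absurd (conj_eq_zero_iff.mp h3) (R_ne_zero hhom hg)
  · intro h u v g hg
    rw [redMap_apply, h u v g hg, zero_smul, sub_zero]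

lemma wd_isNormalForm_iff (hhom : NHomogLC1 K X N R) {w : FreeMonoid X} :
    IsNormalForm K X R (wd K X w) ↔ ∀ u v : FreeMonoid X, ∀ g ∈ R, w ≠ u * lm K X g * v := by
  rw [isNormalForm_iff hhom]
  constructor
  · intro h u v g hg heq
    have := h u v g hg
    rw [wd_apply, ← heq, if_pos rfl] at this
    exact one_ne_zero this
  · intro h u v g hg
    rw [wd_apply, if_neg (fun he => h u v g hg he.symm)]

lemma supp_normal (hhom : NHomogLC1 K X N R) {f : F K X} (hf : IsNormalForm K X R f)
    {w : FreeMonoid X} (hw : w ∈ f.coeff.support) : IsNormalForm K X R (wd K X w) := by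
  rw [wd_isNormalForm_iff hhom]
  intro u v g hg heq
  have := (isNormalForm_iff hhom).mp hf u v g hg
  rw [← heq] at this
  exact Finsupp.mem_support_iff.mp hw this

/-- folding a list of reductions preserves a predicate preserved by each reduction. -/
lemma foldr_pres (P : F K X → Prop)
    (hstep : ∀ u v : FreeMonoid X, ∀ g ∈ R, ∀ f, P f → P (redMap K X u g v f))
    (L : List (FreeMonoid X × F K X × FreeMonoid X)) (hL : ∀ p ∈ L, p.2.1 ∈ R)
    {f : F K X} (hf : P f) :
    P (L.foldr (fun p h => redMap K X p.1 p.2.1 p.2.2 h) f) := by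
  induction L with
  | nil => exact hf
  | cons p L ih =>
      exact hstep p.1 p.2.2 p.2.1 (hL p (by simp)) _
        (ih (fun q hq => hL q (by simp [hq])))

section Phi

variable {phi : F K X →ₗ[K] F K X}

lemma phi_fix (hphi : ∀ f : F K X, NormalFormOf K X R f (phi f))
    {f : F K X} (hf : IsNormalForm K X R f) : phi f = f := by
  obtain ⟨-, L, hL, hfold⟩ := hphi f
  rw [hfold]
  exact foldr_pres (fun y => y = f)
    (fun u v g hg y hy => by rw [hy]; exact hf u v g hg) L hL rfl

lemma phi_normal (hphi : ∀ f : F K X, NormalFormOf K X R f (phi f)) (f : F K X) :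
    IsNormalForm K X R (phi f) := (hphi f).1

lemma phi_idem (hphi : ∀ f : F K X, NormalFormOf K X R f (phi f)) (f : F K X) :
    phi (phi f) = phi f := phi_fix hphi (phi_normal hphi f)

/-- the span of ideal generators of degree `d` with leading word satisfying `P`. -/
noncomputable def Mgen (R : Set (F K X)) (d : ℕ) (P : FreeMonoid X → Prop) :
    Submodule K (F K X) :=
  Submodule.span K {x | ∃ u g v, g ∈ R ∧ wlen X (u * lm K X g * v) = d ∧
    P (u * lm K X g * v) ∧ x = wd K X u * g * wd K X v}

lemma Mgen_mono {d : ℕ} {P Q : FreeMonoid X → Prop} (h : ∀ x, P x → Q x) :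
    Mgen R d P ≤ Mgen R d Q := by
  apply Submodule.span_mono
  rintro x ⟨u, g, v, hg, hd, hP, rfl⟩
  exact ⟨u, g, v, hg, hd, h _ hP, rfl⟩

lemma conj_mem_Mgen (hhom : NHomogLC1 K X N R) {u v : FreeMonoid X} {g : F K X} (hg : g ∈ R)
    {d : ℕ} (hd : wlen X (u * lm K X g * v) = d) {P : FreeMonoid X → Prop}
    (hP : P (u * lm K X g * v)) :
    wd K X u * g * wd K X v ∈ Mgen R d P :=
  Submodule.subset_span ⟨u, g, v, hg, hd, hP, rfl⟩

lemma conj_degSub (hhom : NHomogLC1 K X N R) {u v : FreeMonoid X} {g : F K X} (hg : g ∈ R)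
    {d : ℕ} (hd : wlen X (u * lm K X g * v) = d) :
    wd K X u * g * wd K X v ∈ degSub K X d := by
  have h1 := conj_mem_degSub (u := u) (v := v) (hhom g hg).1
  have h2 : wlen X u + N + wlen X v = d := by
    rw [← hd, wlen_mul, wlen_mul, wlen_lm hhom hg]
  rwa [h2] at h1

/-- key invariant: applying reductions to `f ∈ degSub d` changes it by elements of `Mgen`,
keeps it in `degSub d`, and does not increase the supports beyond `P`-words provided `P` is
down-closed along the order among length-`d` words. -/
lemma redMap_invariant (hhom : NHomogLC1 K X N R)
    {d : ℕ} {P : FreeMonoid X → Prop}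
    (hdc : ∀ x y : FreeMonoid X, wlen X x = d → wlen X y = d → x ≤ y → P y → P x)
    (u v : FreeMonoid X) {g : F K X} (hg : g ∈ R) (f : F K X)
    (hf : f ∈ degSub K X d ∧ ∀ x ∈ f.coeff.support, P x) :
    (redMap K X u g v f ∈ degSub K X d ∧ ∀ x ∈ (redMap K X u g v f).coeff.support, P x) ∧
      f - redMap K X u g v f ∈ Mgen R d P := by
  rw [redMap_apply]
  by_cases hc : f.coeff (u * lm K X g * v) = 0
  · rw [hc, zero_smul, sub_zero]
    exact ⟨hf, by simp [Submodule.zero_mem]⟩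
  · have hw : u * lm K X g * v ∈ f.coeff.support := Finsupp.mem_support_iff.mpr hc
    have hwd : wlen X (u * lm K X g * v) = d := hf.1 _ hw
    have hwP : P (u * lm K X g * v) := hf.2 _ hw
    have hconjdeg := conj_degSub hhom hg hwd
    have hsuppP : ∀ x ∈ (wd K X u * g * wd K X v).coeff.support, P x := by
      intro x hx
      have hx' := hx
      rw [conj_support] at hx'
      obtain ⟨y, hy, rfl⟩ := Finset.mem_image.mp hx'
      have hylm : y ≤ lm K X g := le_lm hy
      have hylen : wlen X y = N := (hhom g hg).1 y hy
      have : u * y * v ≤ u * lm K X g * v :=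
        mul_le_mul_words hylm (by rw [hylen, wlen_lm hhom hg]) u v
      exact hdc _ _ (hconjdeg _ hx) hwd this hwP
    constructor
    · constructor
      · exact Submodule.sub_mem _ hf.1 (Submodule.smul_mem _ _ hconjdeg)
      · intro x hx
        rcases Finset.mem_union.mp (Finsupp.support_sub hx) with h | h
        · exact hf.2 x h
        · exact hsuppP x (Finsupp.support_smul h)
    · rw [sub_sub_cancel]
      exact Submodule.smul_mem _ _ (conj_mem_Mgen hhom hg hwd hwP)

/-- combined foldr invariant. -/
lemma foldr_invariant (hhom : NHomogLC1 K X N R)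
    {d : ℕ} {P : FreeMonoid X → Prop}
    (hdc : ∀ x y : FreeMonoid X, wlen X x = d → wlen X y = d → x ≤ y → P y → P x)
    (L : List (FreeMonoid X × F K X × FreeMonoid X)) (hL : ∀ p ∈ L, p.2.1 ∈ R)
    {f : F K X} (hf : f ∈ degSub K X d ∧ ∀ x ∈ f.coeff.support, P x) :
    (L.foldr (fun p h => redMap K X p.1 p.2.1 p.2.2 h) f ∈ degSub K X d ∧
      ∀ x ∈ (L.foldr (fun p h => redMap K X p.1 p.2.1 p.2.2 h) f).coeff.support, P x) ∧
    f - L.foldr (fun p h => redMap K X p.1 p.2.1 p.2.2 h) f ∈ Mgen R d P := by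
  induction L with
  | nil => exact ⟨hf, by simp [Submodule.zero_mem]⟩
  | cons p L ih =>
      obtain ⟨ih1, ih2⟩ := ih (fun q hq => hL q (by simp [hq]))
      obtain ⟨h1, h2⟩ := redMap_invariant hhom hdc p.1 p.2.2 (hL p (by simp)) _ ih1
      refine ⟨h1, ?_⟩
      have := Submodule.add_mem _ ih2 h2
      simpa using this

lemma phi_invariant (hhom : NHomogLC1 K X N R)
    (hphi : ∀ f : F K X, NormalFormOf K X R f (phi f))
    {d : ℕ} {P : FreeMonoid X → Prop}
    (hdc : ∀ x y : FreeMonoid X, wlen X x = d → wlen X y = d → x ≤ y → P y → P x)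
    {f : F K X} (hf : f ∈ degSub K X d ∧ ∀ x ∈ f.coeff.support, P x) :
    (phi f ∈ degSub K X d ∧ ∀ x ∈ (phi f).coeff.support, P x) ∧ f - phi f ∈ Mgen R d P := by
  obtain ⟨-, L, hL, hfold⟩ := hphi f
  rw [hfold]
  exact foldr_invariant hhom hdc L hL hf

lemma phi_degSub (hhom : NHomogLC1 K X N R)
    (hphi : ∀ f : F K X, NormalFormOf K X R f (phi f))
    {d : ℕ} {f : F K X} (hf : f ∈ degSub K X d) : phi f ∈ degSub K X d :=
  ((phi_invariant hhom hphi (P := fun _ => True) (fun _ _ _ _ _ _ => trivial)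
    ⟨hf, fun _ _ => trivial⟩).1).1

lemma sub_phi_mem (hhom : NHomogLC1 K X N R)
    (hphi : ∀ f : F K X, NormalFormOf K X R f (phi f))
    {d : ℕ} {f : F K X} (hf : f ∈ degSub K X d) :
    f - phi f ∈ Mgen R d (fun _ => True) :=
  (phi_invariant hhom hphi (P := fun _ => True) (fun _ _ _ _ _ _ => trivial)
    ⟨hf, fun _ _ => trivial⟩).2

end Phi

end CC

namespace CC

variable {K : Type*} [Field K] {X : Type*} [Fintype X] [LinearOrder X]
variable {N : ℕ} {R : Set (F K X)}

lemma take_mul {a : ℕ} (u v : FreeMonoid X) (h : wlen X u = a) :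
    FreeMonoid.ofList ((FreeMonoid.toList (u * v)).take a) = u := by
  rw [FreeMonoid.toList_mul, List.take_left' h, FreeMonoid.ofList_toList]

lemma drop_mul {a : ℕ} (u v : FreeMonoid X) (h : wlen X u = a) :
    FreeMonoid.ofList ((FreeMonoid.toList (u * v)).drop a) = v := by
  rw [FreeMonoid.toList_mul, List.drop_left' h, FreeMonoid.ofList_toList]

lemma applyLeft_wd (T : F K X →ₗ[K] F K X) (a b : ℕ) (w : FreeMonoid X) :
    applyLeft K X T a b (wd K X w) =
      if wlen X w = a + b then
        T (wd K X (FreeMonoid.ofList ((FreeMonoid.toList w).take a))) *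
          wd K X (FreeMonoid.ofList ((FreeMonoid.toList w).drop a))
      else wd K X w := by
  rw [applyLeft]
  exact lc_wd _ w

lemma applyRight_wd (T : F K X →ₗ[K] F K X) (a b : ℕ) (w : FreeMonoid X) :
    applyRight K X T a b (wd K X w) =
      if wlen X w = a + b then
        wd K X (FreeMonoid.ofList ((FreeMonoid.toList w).take a)) *
          T (wd K X (FreeMonoid.ofList ((FreeMonoid.toList w).drop a)))
      else wd K X w := by
  rw [applyRight]
  exact lc_wd _ w

lemma applyLeft_mul_wd (T : F K X →ₗ[K] F K X) {a b : ℕ} (u v : FreeMonoid X)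
    (hu : wlen X u = a) (hv : wlen X v = b) :
    applyLeft K X T a b (wd K X (u * v)) = T (wd K X u) * wd K X v := by
  rw [applyLeft_wd, if_pos (by rw [wlen_mul, hu, hv]), take_mul u v hu, drop_mul u v hu]

lemma applyRight_mul_wd (T : F K X →ₗ[K] F K X) {a b : ℕ} (u v : FreeMonoid X)
    (hu : wlen X u = a) (hv : wlen X v = b) :
    applyRight K X T a b (wd K X (u * v)) = wd K X u * T (wd K X v) := by
  rw [applyRight_wd, if_pos (by rw [wlen_mul, hu, hv]), take_mul u v hu, drop_mul u v hu]

lemma Sop_lm (hhom : NHomogLC1 K X N R) (hred : Reduced K X R) {g : F K X} (hg : g ∈ R) :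
    Sop K X R (wd K X (lm K X g)) = wd K X (lm K X g) - g := by
  rw [Sop, lc_wd]
  have hex : ∃ f ∈ R, lm K X f = lm K X g := ⟨g, hg, rfl⟩
  rw [dif_pos hex]
  have := lm_inj hhom hred hex.choose_spec.1 hg hex.choose_spec.2
  rw [this]

lemma Sop_not_lm {p : FreeMonoid X} (h : ∀ f ∈ R, lm K X f ≠ p) :
    Sop K X R (wd K X p) = wd K X p := by
  rw [Sop, lc_wd]
  rw [dif_neg]
  rintro ⟨f, hf, hlf⟩
  exact h f hf hlf

/-- span of words of length `d` strictly smaller than `z`. -/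
noncomputable def spanLT (d : ℕ) (z : FreeMonoid X) : Submodule K (F K X) :=
  Submodule.span K {y | ∃ x, (wlen X x = d ∧ x < z) ∧ y = wd K X x}

/-- an operator suitable for the confluence argument below `z`. -/
def PresOp (R : Set (F K X)) (d : ℕ) (z : FreeMonoid X) (Q : F K X →ₗ[K] F K X) : Prop :=
  ∀ y ∈ (spanLT d z : Submodule K (F K X)), Q y ∈ (spanLT d z : Submodule K (F K X)) ∧
    y - Q y ∈ Mgen R d (· < z)

lemma presOp_one {d : ℕ} {z : FreeMonoid X} : PresOp R d z 1 := by
  intro y hy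
  exact ⟨hy, by simp [Submodule.zero_mem]⟩

lemma presOp_mul {d : ℕ} {z : FreeMonoid X} {Q1 Q2 : F K X →ₗ[K] F K X}
    (h1 : PresOp R d z Q1) (h2 : PresOp R d z Q2) : PresOp R d z (Q1 * Q2) := by
  intro y hy
  obtain ⟨hy2, hm2⟩ := h2 y hy
  obtain ⟨hy1, hm1⟩ := h1 _ hy2
  refine ⟨hy1, ?_⟩
  have := Submodule.add_mem _ hm2 hm1
  simpa using this

lemma presOp_pow {d : ℕ} {z : FreeMonoid X} {Q : F K X →ₗ[K] F K X}
    (h : PresOp R d z Q) (n : ℕ) : PresOp R d z (Q ^ n) := by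
  induction n with
  | zero => exact presOp_one
  | succ n ih => rw [pow_succ]; exact presOp_mul ih h

lemma altProd_decomp {d : ℕ} {z : FreeMonoid X} {Q1 Q2 : F K X →ₗ[K] F K X}
    (h1 : PresOp R d z Q1) (h2 : PresOp R d z Q2) {k : ℕ} (hk : 1 ≤ k) :
    ∃ C : F K X →ₗ[K] F K X, altProd Q1 Q2 k = C * Q2 ∧ PresOp R d z C := by
  rw [altProd]
  by_cases he : Even k
  · rw [if_pos he]
    have hj : 1 ≤ k / 2 := by
      obtain ⟨j, rfl⟩ := he; omega
    refine ⟨(Q1 * Q2) ^ (k / 2 - 1) * Q1, ?_, ?_⟩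
    · rw [mul_assoc, ← pow_succ]
      congr 1
      omega
    · exact presOp_mul (presOp_pow (presOp_mul h1 h2) _) h1
  · rw [if_neg he]
    by_cases hj : k / 2 = 0
    · rw [hj, pow_zero, mul_one]
      exact ⟨1, by rw [one_mul], presOp_one⟩
    · refine ⟨Q2 * ((Q1 * Q2) ^ (k / 2 - 1) * Q1), ?_, ?_⟩
      · rw [mul_assoc, mul_assoc, ← pow_succ]
        congr 2
        omega
      · exact presOp_mul h2 (presOp_mul (presOp_pow (presOp_mul h1 h2) _) h1)

section Core

variable (hhom : NHomogLC1 K X N R) (hred : Reduced K X R)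

lemma spanLT_mem {d : ℕ} {z : FreeMonoid X} {f : F K X}
    (h : ∀ x ∈ f.coeff.support, wlen X x = d ∧ x < z) : f ∈ (spanLT d z : Submodule K (F K X)) :=
  mem_span_words h

lemma spanLT_le_degSub {d : ℕ} {z : FreeMonoid X} :
    (spanLT d z : Submodule K (F K X)) ≤ degSub K X d := by
  rw [spanLT, Submodule.span_le]
  rintro y ⟨x, ⟨hx, -⟩, rfl⟩
  exact wd_mem_degSub hx

include hhom hred in
lemma presOp_applyLeft {δ : ℕ} {z : FreeMonoid X} :
    PresOp R (N + δ) z (applyLeft K X (Sop K X R) N δ) := by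
  intro y hy
  rw [spanLT] at hy
  -- reduce to generators via span induction on a submodule condition
  set U : Submodule K (F K X) :=
    Submodule.comap (applyLeft K X (Sop K X R) N δ) (spanLT (N + δ) z) ⊓
      Submodule.comap (LinearMap.id - applyLeft K X (Sop K X R) N δ) (Mgen R (N + δ) (· < z))
      with hU
  have hle : Submodule.span K {y | ∃ x, (wlen X x = N + δ ∧ x < z) ∧ y = wd K X x} ≤ U := by
    rw [Submodule.span_le]
    rintro y ⟨x, ⟨hxl, hxz⟩, rfl⟩
    have hxl' : (FreeMonoid.toList x).length = N + δ := hxl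
    set p := FreeMonoid.ofList ((FreeMonoid.toList x).take N) with hp
    set q := FreeMonoid.ofList ((FreeMonoid.toList x).drop N) with hq
    have hpq : p * q = x := by
      apply FreeMonoid.toList.injective
      simp [hp, hq, FreeMonoid.toList_mul]
    have hpl : wlen X p = N := by
      simp only [hp, wlen, FreeMonoid.toList_ofList, List.length_take]
      have : N ≤ wlen X x := by omega
      exact min_eq_left (by exact this)
    have hql : wlen X q = δ := by
      simp only [hq, wlen, FreeMonoid.toList_ofList, List.length_drop]
      omega
    have happ : applyLeft K X (Sop K X R) N δ (wd K X x) = Sop K X R (wd K X p) * wd K X q := by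
      conv_lhs => rw [← hpq]
      exact applyLeft_mul_wd _ p q hpl hql
    by_cases hex : ∃ g ∈ R, lm K X g = p
    · obtain ⟨g, hg, hlg⟩ := hex
      have hS : Sop K X R (wd K X p) = wd K X p - g := by rw [← hlg, Sop_lm hhom hred hg]
      have heq : applyLeft K X (Sop K X R) N δ (wd K X x) = wd K X x - g * wd K X q := by
        rw [happ, hS, sub_mul, wd_mul, hpq]
      have hsupp : ∀ c ∈ ((wd K X p - g) * wd K X q).coeff.support, wlen X c = N + δ ∧ c < z := by
        intro c hc
        have : (wd K X p - g) * wd K X q = wd K X 1 * (wd K X p - g) * wd K X q := by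
          rw [wd_one, one_mul]
        rw [this, conj_support] at hc
        obtain ⟨y', hy', rfl⟩ := Finset.mem_image.mp hc
        rw [← hlg] at hy'
        obtain ⟨hylt, hyl⟩ := tail_supp hhom hg y' hy'
        constructor
        · rw [wlen_mul, wlen_mul, hyl, wlen, FreeMonoid.toList_one]
          simpa using hql
        · have : (1 : FreeMonoid X) * y' * q < 1 * lm K X g * q :=
            mul_lt_mul_words hylt (by rw [hyl, wlen_lm hhom hg]) 1 q q
          rw [one_mul, one_mul, hlg, hpq] at this
          exact lt_trans this hxz
      constructor
      · show applyLeft K X (Sop K X R) N δ (wd K X x) ∈ spanLT (N + δ) z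
        rw [heq]
        have h2 : wd K X x - g * wd K X q = (wd K X p - g) * wd K X q := by
          rw [sub_mul, wd_mul, hpq]
        rw [h2]
        exact spanLT_mem hsupp
      · show wd K X x - applyLeft K X (Sop K X R) N δ (wd K X x) ∈ Mgen R (N + δ) (· < z)
        rw [heq, sub_sub_cancel]
        have : g * wd K X q = wd K X 1 * g * wd K X q := by rw [wd_one, one_mul]
        rw [this]
        apply conj_mem_Mgen hhom hg
        · rw [one_mul, hlg, hpq]
          exact hxl
        · show (1 : FreeMonoid X) * lm K X g * q < z
          rw [one_mul, hlg, hpq]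
          exact hxz
    · have hS : Sop K X R (wd K X p) = wd K X p :=
        Sop_not_lm (fun f hf hlf => hex ⟨f, hf, hlf⟩)
      have heq : applyLeft K X (Sop K X R) N δ (wd K X x) = wd K X x := by
        rw [happ, hS, wd_mul, hpq]
      constructor
      · show applyLeft K X (Sop K X R) N δ (wd K X x) ∈ spanLT (N + δ) z
        rw [heq]
        exact Submodule.subset_span ⟨x, ⟨hxl, hxz⟩, rfl⟩
      · show wd K X x - applyLeft K X (Sop K X R) N δ (wd K X x) ∈ Mgen R (N + δ) (· < z)
        rw [heq, sub_self]
        exact Submodule.zero_mem _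
  have := hle hy
  rw [hU] at this
  exact ⟨this.1, this.2⟩

include hhom hred in
lemma presOp_applyRight {δ : ℕ} {z : FreeMonoid X} :
    PresOp R (N + δ) z (applyRight K X (Sop K X R) δ N) := by
  intro y hy
  rw [spanLT] at hy
  set U : Submodule K (F K X) :=
    Submodule.comap (applyRight K X (Sop K X R) δ N) (spanLT (N + δ) z) ⊓
      Submodule.comap (LinearMap.id - applyRight K X (Sop K X R) δ N) (Mgen R (N + δ) (· < z))
      with hU
  have hle : Submodule.span K {y | ∃ x, (wlen X x = N + δ ∧ x < z) ∧ y = wd K X x} ≤ U := by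
    rw [Submodule.span_le]
    rintro y ⟨x, ⟨hxl, hxz⟩, rfl⟩
    have hxl' : (FreeMonoid.toList x).length = N + δ := hxl
    set q := FreeMonoid.ofList ((FreeMonoid.toList x).take δ) with hq
    set p := FreeMonoid.ofList ((FreeMonoid.toList x).drop δ) with hp
    have hpq : q * p = x := by
      apply FreeMonoid.toList.injective
      simp [hp, hq, FreeMonoid.toList_mul]
    have hql : wlen X q = δ := by
      simp only [hq, wlen, FreeMonoid.toList_ofList, List.length_take]
      exact min_eq_left (by omega)
    have hpl : wlen X p = N := by
      simp only [hp, wlen, FreeMonoid.toList_ofList, List.length_drop]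
      omega
    have happ : applyRight K X (Sop K X R) δ N (wd K X x) = wd K X q * Sop K X R (wd K X p) := by
      conv_lhs => rw [← hpq]
      exact applyRight_mul_wd _ q p hql hpl
    by_cases hex : ∃ g ∈ R, lm K X g = p
    · obtain ⟨g, hg, hlg⟩ := hex
      have hS : Sop K X R (wd K X p) = wd K X p - g := by rw [← hlg, Sop_lm hhom hred hg]
      have heq : applyRight K X (Sop K X R) δ N (wd K X x) = wd K X x - wd K X q * g := by
        rw [happ, hS, mul_sub, wd_mul, hpq]
      have hsupp : ∀ c ∈ (wd K X q * (wd K X p - g)).coeff.support, wlen X c = N + δ ∧ c < z := by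
        intro c hc
        have : wd K X q * (wd K X p - g) = wd K X q * (wd K X p - g) * wd K X 1 := by
          rw [wd_one, mul_one]
        rw [this, conj_support] at hc
        obtain ⟨y', hy', rfl⟩ := Finset.mem_image.mp hc
        rw [← hlg] at hy'
        obtain ⟨hylt, hyl⟩ := tail_supp hhom hg y' hy'
        constructor
        · have hw1 : wlen X (1 : FreeMonoid X) = 0 := rfl
          rw [wlen_mul, wlen_mul, hyl, hql, hw1]
          omega
        · rw [mul_one]
          have h5 : q * y' * 1 < q * lm K X g * 1 :=
            mul_lt_mul_words hylt (by rw [hyl, wlen_lm hhom hg]) q 1 1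
          rw [mul_one, mul_one, hlg, hpq] at h5
          exact lt_trans h5 hxz
      constructor
      · show applyRight K X (Sop K X R) δ N (wd K X x) ∈ spanLT (N + δ) z
        rw [heq]
        have h2 : wd K X x - wd K X q * g = wd K X q * (wd K X p - g) := by
          rw [mul_sub, wd_mul, hpq]
        rw [h2]
        exact spanLT_mem hsupp
      · show wd K X x - applyRight K X (Sop K X R) δ N (wd K X x) ∈ Mgen R (N + δ) (· < z)
        rw [heq, sub_sub_cancel]
        have : wd K X q * g = wd K X q * g * wd K X 1 := by rw [wd_one, mul_one]
        rw [this]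
        apply conj_mem_Mgen hhom hg
        · rw [mul_one, hlg, hpq]
          exact hxl
        · show q * lm K X g * 1 < z
          rw [mul_one, hlg, hpq]
          exact hxz
    · have hS : Sop K X R (wd K X p) = wd K X p :=
        Sop_not_lm (fun f hf hlf => hex ⟨f, hf, hlf⟩)
      have heq : applyRight K X (Sop K X R) δ N (wd K X x) = wd K X x := by
        rw [happ, hS, wd_mul, hpq]
      constructor
      · show applyRight K X (Sop K X R) δ N (wd K X x) ∈ spanLT (N + δ) z
        rw [heq]
        exact Submodule.subset_span ⟨x, ⟨hxl, hxz⟩, rfl⟩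
      · show wd K X x - applyRight K X (Sop K X R) δ N (wd K X x) ∈ Mgen R (N + δ) (· < z)
        rw [heq, sub_self]
        exact Submodule.zero_mem _
  have := hle hy
  rw [hU] at this
  exact ⟨this.1, this.2⟩

end Core

end CC

namespace CC

variable {K : Type*} [Field K] {X : Type*} [Fintype X] [LinearOrder X]
variable {N : ℕ} {R : Set (F K X)}

lemma conj_span_le {S : Set (F K X)} {M : Submodule K (F K X)} (a b : F K X)
    (h : ∀ s ∈ S, a * s * b ∈ M) : ∀ x ∈ Submodule.span K S, a * x * b ∈ M := by
  intro x hx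
  have hle : Submodule.span K S ≤
      Submodule.comap ((LinearMap.mulRight K b).comp (LinearMap.mulLeft K a)) M :=
    Submodule.span_le.mpr (fun s hs => h s hs)
  have := hle hx
  simpa using this

section Core2

variable (hhom : NHomogLC1 K X N R) (hred : Reduced K X R)
variable (hside : SideConfluent K X N R)

include hhom hred hside in
lemma overlap_core {δ : ℕ} (hδ1 : 1 ≤ δ) (hδ2 : δ ≤ N - 1)
    {g g₁ : F K X} (hg : g ∈ R) (hg₁ : g₁ ∈ R) {t t' z : FreeMonoid X}
    (hz1 : z = lm K X g * t) (hz2 : z = t' * lm K X g₁) (ht : wlen X t = δ) :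
    g * wd K X t - wd K X t' * g₁ ∈ Mgen R (N + δ) (· < z) := by
  obtain ⟨k, hk, heq⟩ := hside δ hδ1 hδ2
  have hzl : wlen X z = N + δ := by rw [hz1, wlen_mul, wlen_lm hhom hg, ht]
  have ht' : wlen X t' = δ := by
    have h2 := hzl
    rw [hz2, wlen_mul, wlen_lm hhom hg₁] at h2
    omega
  have hzdeg : wd K X z ∈ degSub K X (N + δ) := wd_mem_degSub hzl
  have hTL : applyLeft K X (Sop K X R) N δ (wd K X z) = wd K X z - g * wd K X t := by
    rw [hz1, applyLeft_mul_wd _ _ _ (wlen_lm hhom hg) ht, Sop_lm hhom hred hg, sub_mul, wd_mul]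
  have hTR : applyRight K X (Sop K X R) δ N (wd K X z) = wd K X z - wd K X t' * g₁ := by
    rw [hz2, applyRight_mul_wd _ _ _ ht' (wlen_lm hhom hg₁), Sop_lm hhom hred hg₁, mul_sub, wd_mul]
  have hTLmem : applyLeft K X (Sop K X R) N δ (wd K X z) ∈
      (spanLT (N + δ) z : Submodule K (F K X)) := by
    rw [hTL]
    have h2 : wd K X z - g * wd K X t = wd K X 1 * (wd K X (lm K X g) - g) * wd K X t := by
      rw [wd_one, one_mul, sub_mul, wd_mul, ← hz1]
    rw [h2]
    apply spanLT_mem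
    intro c hc
    rw [conj_support] at hc
    obtain ⟨y, hy, rfl⟩ := Finset.mem_image.mp hc
    obtain ⟨hylt, hyl⟩ := tail_supp hhom hg y hy
    constructor
    · have hw1 : wlen X (1 : FreeMonoid X) = 0 := rfl
      rw [wlen_mul, wlen_mul, hw1, hyl, ht]
      omega
    · have h5 : (1 : FreeMonoid X) * y * t < 1 * lm K X g * t :=
        mul_lt_mul_words hylt (by rw [hyl, wlen_lm hhom hg]) 1 t t
      rwa [one_mul, one_mul, ← hz1] at h5
  have hTRmem : applyRight K X (Sop K X R) δ N (wd K X z) ∈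
      (spanLT (N + δ) z : Submodule K (F K X)) := by
    rw [hTR]
    have h2 : wd K X z - wd K X t' * g₁ = wd K X t' * (wd K X (lm K X g₁) - g₁) * wd K X 1 := by
      rw [wd_one, mul_one, mul_sub, wd_mul, ← hz2]
    rw [h2]
    apply spanLT_mem
    intro c hc
    rw [conj_support] at hc
    obtain ⟨y, hy, rfl⟩ := Finset.mem_image.mp hc
    obtain ⟨hylt, hyl⟩ := tail_supp hhom hg₁ y hy
    constructor
    · have hw1 : wlen X (1 : FreeMonoid X) = 0 := rfl
      rw [wlen_mul, wlen_mul, hw1, hyl, ht']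
      omega
    · have h6 : t' * y * 1 = t' * y := mul_one _
      rw [h6]
      have h5 : t' * y * 1 < t' * lm K X g₁ * 1 :=
        mul_lt_mul_words hylt (by rw [hyl, wlen_lm hhom hg₁]) t' 1 1
      rwa [mul_one, mul_one, ← hz2] at h5
  obtain ⟨C, hC, hCP⟩ :=
    altProd_decomp (presOp_applyRight hhom hred (δ := δ) (z := z))
      (presOp_applyLeft hhom hred (δ := δ) (z := z)) hk
  obtain ⟨C', hC', hC'P⟩ :=
    altProd_decomp (presOp_applyLeft hhom hred (δ := δ) (z := z))
      (presOp_applyRight hhom hred (δ := δ) (z := z)) hk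
  have hA := heq (wd K X z) hzdeg
  rw [hC, hC'] at hA
  rw [Module.End.mul_apply, Module.End.mul_apply] at hA
  obtain ⟨-, hm1⟩ := hCP _ hTLmem
  obtain ⟨-, hm2⟩ := hC'P _ hTRmem
  -- T_L z - C (T_L z) = m1, T_R z - C' (T_R z) = m2, C (T_L z) = C' (T_R z)
  have key : (applyLeft K X (Sop K X R) N δ (wd K X z)
        - C (applyLeft K X (Sop K X R) N δ (wd K X z)))
      - (applyRight K X (Sop K X R) δ N (wd K X z)
        - C' (applyRight K X (Sop K X R) δ N (wd K X z)))
      = wd K X t' * g₁ - g * wd K X t := by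
    rw [hA, hTL, hTR]
    abel
  have hmem := Submodule.sub_mem _ hm1 hm2
  rw [key] at hmem
  have := Submodule.neg_mem _ hmem
  rwa [neg_sub] at this

end Core2

end CC

namespace CC

variable {K : Type*} [Field K] {X : Type*} [Fintype X] [LinearOrder X]
variable {N : ℕ} {R : Set (F K X)}

lemma fm_ext {a b : FreeMonoid X} (h : FreeMonoid.toList a = FreeMonoid.toList b) : a = b :=
  FreeMonoid.toList.injective h

section Resolve

variable (hN : 2 ≤ N) (hhom : NHomogLC1 K X N R) (hred : Reduced K X R)
variable (hside : SideConfluent K X N R)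

include hN hhom hred hside in
lemma resolve_le {u v u₁ v₁ : FreeMonoid X} {g g₁ : F K X} (hg : g ∈ R) (hg₁ : g₁ ∈ R)
    (heqw : u * lm K X g * v = u₁ * lm K X g₁ * v₁) (hle : wlen X u ≤ wlen X u₁) :
    wd K X u * g * wd K X v - wd K X u₁ * g₁ * wd K X v₁
      ∈ Mgen R (wlen X (u * lm K X g * v)) (· < u * lm K X g * v) := by
  classical
  have hlg : wlen X (lm K X g) = N := wlen_lm hhom hg
  have hlg₁ : wlen X (lm K X g₁) = N := wlen_lm hhom hg₁
  have hlist : FreeMonoid.toList u ++ (FreeMonoid.toList (lm K X g) ++ FreeMonoid.toList v)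
      = FreeMonoid.toList u₁ ++ (FreeMonoid.toList (lm K X g₁) ++ FreeMonoid.toList v₁) := by
    have h0 := congrArg (fun x : FreeMonoid X => FreeMonoid.toList x) heqw
    simpa [FreeMonoid.toList_mul, List.append_assoc] using h0
  by_cases heqlen : wlen X u = wlen X u₁
  · -- same position
    obtain ⟨h1, h2⟩ := List.append_inj hlist heqlen
    obtain ⟨h3, h4⟩ := List.append_inj h2 (by
      have e1 : (FreeMonoid.toList (lm K X g)).length = N := hlg
      have e2 : (FreeMonoid.toList (lm K X g₁)).length = N := hlg₁
      omega)
    have hu : u = u₁ := fm_ext h1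
    have hgg : g = g₁ := lm_inj hhom hred hg hg₁ (fm_ext h3)
    have hv : v = v₁ := fm_ext h4
    rw [hu, hgg, hv, sub_self]
    exact Submodule.zero_mem _
  · have hlt : wlen X u < wlen X u₁ := lt_of_le_of_ne hle heqlen
    have hupre : FreeMonoid.toList u <+: FreeMonoid.toList u₁ := by
      apply List.prefix_of_prefix_length_le (l₃ := FreeMonoid.toList u₁ ++
        (FreeMonoid.toList (lm K X g₁) ++ FreeMonoid.toList v₁))
      · exact ⟨_, hlist⟩
      · exact ⟨_, rfl⟩
      · exact le_of_lt hlt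
    obtain ⟨ls, hls⟩ := hupre
    set s := FreeMonoid.ofList ls with hsdef
    have hsl : FreeMonoid.toList s = ls := rfl
    have hu₁ : u₁ = u * s := by
      apply fm_ext
      rw [FreeMonoid.toList_mul, hsl, hls]
    set δ := wlen X u₁ - wlen X u with hδ
    have hδ1 : 1 ≤ δ := by omega
    have hsδ : wlen X s = δ := by
      have hlen := congrArg List.length hls
      simp only [List.length_append] at hlen
      have h1 : (FreeMonoid.toList u₁).length = wlen X u₁ := rfl
      have h2 : (FreeMonoid.toList u).length = wlen X u := rfl
      show ls.length = δ
      omega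
    have h2 : lm K X g * v = s * (lm K X g₁ * v₁) := by
      apply fm_ext
      apply List.append_cancel_left (as := FreeMonoid.toList u)
      have h3 : FreeMonoid.toList u ++ (FreeMonoid.toList (lm K X g) ++ FreeMonoid.toList v)
          = FreeMonoid.toList u ++ (ls ++ (FreeMonoid.toList (lm K X g₁)
            ++ FreeMonoid.toList v₁)) := by
        rw [hlist, ← hls]
        simp [List.append_assoc]
      simpa [FreeMonoid.toList_mul, hsl, List.append_assoc] using h3
    have h2l : FreeMonoid.toList (lm K X g) ++ FreeMonoid.toList v
        = ls ++ (FreeMonoid.toList (lm K X g₁) ++ FreeMonoid.toList v₁) := by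
      have h0 := congrArg (fun x : FreeMonoid X => FreeMonoid.toList x) h2
      simpa [FreeMonoid.toList_mul, hsl, List.append_assoc] using h0
    rcases Nat.lt_or_ge δ N with hδN | hδN
    · -- overlap case
      have hgpre : FreeMonoid.toList (lm K X g) <+: ls ++ FreeMonoid.toList (lm K X g₁) := by
        apply List.prefix_of_prefix_length_le
          (l₃ := ls ++ (FreeMonoid.toList (lm K X g₁) ++ FreeMonoid.toList v₁))
        · exact ⟨_, h2l⟩
        · exact ⟨FreeMonoid.toList v₁, by simp [List.append_assoc]⟩
        · have e1 : (FreeMonoid.toList (lm K X g)).length = N := hlg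
          have e2 : (FreeMonoid.toList (lm K X g₁)).length = N := hlg₁
          have e3 : ls.length = δ := hsδ
          simp only [List.length_append]
          omega
      obtain ⟨lt2, hlt2⟩ := hgpre
      set t := FreeMonoid.ofList lt2 with htdef
      have htl : FreeMonoid.toList t = lt2 := rfl
      have hlt2' : ∀ r : List X, FreeMonoid.toList (lm K X g) ++ (lt2 ++ r)
          = ls ++ (FreeMonoid.toList (lm K X g₁) ++ r) := by
        intro r
        rw [← List.append_assoc, ← List.append_assoc, hlt2]
      set z := s * lm K X g₁ with hzdef
      have hz1 : z = lm K X g * t := by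
        apply fm_ext
        rw [FreeMonoid.toList_mul, FreeMonoid.toList_mul, hsl, htl]
        exact hlt2.symm
      have ht : wlen X t = δ := by
        have hlen := congrArg List.length hlt2
        simp only [List.length_append] at hlen
        have e1 : (FreeMonoid.toList (lm K X g)).length = N := hlg
        have e2 : (FreeMonoid.toList (lm K X g₁)).length = N := hlg₁
        have e3 : ls.length = δ := hsδ
        show lt2.length = δ
        omega
      have hzlen : wlen X z = N + δ := by
        rw [hzdef, wlen_mul, hsδ, hlg₁]
        omega
      have hv : v = t * v₁ := by
        apply fm_ext
        apply List.append_cancel_left (as := FreeMonoid.toList (lm K X g))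
        show FreeMonoid.toList (lm K X g) ++ FreeMonoid.toList v
          = FreeMonoid.toList (lm K X g) ++ FreeMonoid.toList (t * v₁)
        simp only [FreeMonoid.toList_mul, htl]
        rw [hlt2']
        exact h2l
      have hwz : u * lm K X g * v = u * z * v₁ := by
        rw [hzdef, hv]
        apply fm_ext
        simp only [FreeMonoid.toList_mul, htl, hsl, List.append_assoc]
        rw [hlt2']
      have core := overlap_core hhom hred hside hδ1 (by omega) hg hg₁ hz1 rfl ht
      have hdiff : wd K X u * g * wd K X v - wd K X u₁ * g₁ * wd K X v₁
          = wd K X u * (g * wd K X t - wd K X s * g₁) * wd K X v₁ := by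
        rw [hv, hu₁]
        simp only [← wd_mul]
        noncomm_ring
      rw [hdiff]
      rw [Mgen] at core ⊢
      refine conj_span_le (wd K X u) (wd K X v₁) ?_ _ core
      rintro x ⟨u', g', v', hg', hlen', hlt', rfl⟩
      have hassoc : wd K X u * (wd K X u' * g' * wd K X v') * wd K X v₁
          = wd K X (u * u') * g' * wd K X (v' * v₁) := by
        simp only [← wd_mul]
        noncomm_ring
      rw [hassoc]
      apply Submodule.subset_span
      refine ⟨u * u', g', v' * v₁, hg', ?_, ?_, rfl⟩
      · have e1 : (u * u') * lm K X g' * (v' * v₁) = u * (u' * lm K X g' * v') * v₁ := by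
          apply fm_ext; simp [FreeMonoid.toList_mul, List.append_assoc]
        have e4 : wlen X ((u * u') * lm K X g' * (v' * v₁))
            = wlen X u + wlen X (u' * lm K X g' * v') + wlen X v₁ := by
          rw [e1, wlen_mul, wlen_mul]
        have e5 : wlen X (u * lm K X g * v) = wlen X u + wlen X z + wlen X v₁ := by
          rw [hwz, wlen_mul, wlen_mul]
        rw [e4, e5, hlen', hzlen]
      · show (u * u') * lm K X g' * (v' * v₁) < u * lm K X g * v
        have e1 : (u * u') * lm K X g' * (v' * v₁) = u * (u' * lm K X g' * v') * v₁ := by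
          apply fm_ext; simp [FreeMonoid.toList_mul, List.append_assoc]
        rw [e1, hwz]
        exact mul_lt_mul_words hlt' (by rw [hlen', hzlen]) u v₁ v₁
    · -- disjoint case
      have hgpre : FreeMonoid.toList (lm K X g) <+: ls := by
        apply List.prefix_of_prefix_length_le
          (l₃ := ls ++ (FreeMonoid.toList (lm K X g₁) ++ FreeMonoid.toList v₁))
        · exact ⟨_, h2l⟩
        · exact ⟨_, rfl⟩
        · have e1 : (FreeMonoid.toList (lm K X g)).length = N := hlg
          have e3 : ls.length = δ := hsδ
          omega
      obtain ⟨lt2, hlt2⟩ := hgpre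
      set t := FreeMonoid.ofList lt2 with htdef
      have htl : FreeMonoid.toList t = lt2 := rfl
      have hlt2' : ∀ r : List X, FreeMonoid.toList (lm K X g) ++ (lt2 ++ r) = ls ++ r := by
        intro r
        rw [← List.append_assoc, hlt2]
      have hs : s = lm K X g * t := by
        apply fm_ext
        show ls = FreeMonoid.toList (lm K X g * t)
        simp only [FreeMonoid.toList_mul, htl]
        exact hlt2.symm
      have hv : v = t * (lm K X g₁ * v₁) := by
        apply fm_ext
        apply List.append_cancel_left (as := FreeMonoid.toList (lm K X g))
        show FreeMonoid.toList (lm K X g) ++ FreeMonoid.toList v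
          = FreeMonoid.toList (lm K X g) ++ FreeMonoid.toList (t * (lm K X g₁ * v₁))
        simp only [FreeMonoid.toList_mul, htl]
        rw [hlt2']
        exact h2l
      have hu₁' : u₁ = u * lm K X g * t := by
        rw [hu₁, hs, ← mul_assoc]
      have hdiff : wd K X u * g * wd K X v - wd K X u₁ * g₁ * wd K X v₁
          = (wd K X u * g * wd K X t) * (wd K X (lm K X g₁) - g₁) * wd K X v₁
            - wd K X u * (wd K X (lm K X g) - g) * (wd K X t * g₁ * wd K X v₁) := by
        rw [hv, hu₁']
        simp only [← wd_mul]
        noncomm_ring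
      rw [hdiff]
      apply Submodule.sub_mem
      · -- first term
        have hspan : wd K X (lm K X g₁) - g₁ ∈
            Submodule.span K {y | ∃ x, (x < lm K X g₁ ∧ wlen X x = N) ∧ y = wd K X x} :=
          mem_span_words (tail_supp hhom hg₁)
        refine conj_span_le (wd K X u * g * wd K X t) (wd K X v₁) ?_ _ hspan
        rintro x ⟨y, ⟨hylt, hyl⟩, rfl⟩
        have hassoc : wd K X u * g * wd K X t * wd K X y * wd K X v₁
            = wd K X u * g * wd K X (t * (y * v₁)) := by
          simp only [← wd_mul]
          noncomm_ring
        rw [hassoc]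
        apply conj_mem_Mgen hhom hg
        · conv_rhs => rw [hv]
          simp only [wlen_mul, hyl, hlg₁]
        · show u * lm K X g * (t * (y * v₁)) < u * lm K X g * v
          have h5 : (u * lm K X g * t) * y * v₁ < (u * lm K X g * t) * lm K X g₁ * v₁ :=
            mul_lt_mul_words hylt (by rw [hyl, hlg₁]) _ v₁ v₁
          have e1 : (u * lm K X g * t) * y * v₁ = u * lm K X g * (t * (y * v₁)) := by
            apply fm_ext; simp [FreeMonoid.toList_mul, List.append_assoc]
          have e2 : (u * lm K X g * t) * lm K X g₁ * v₁ = u * lm K X g * v := by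
            rw [hv]
            apply fm_ext; simp [FreeMonoid.toList_mul, List.append_assoc]
          rwa [e1, e2] at h5
      · -- second term
        have hspan : wd K X (lm K X g) - g ∈
            Submodule.span K {y | ∃ x, (x < lm K X g ∧ wlen X x = N) ∧ y = wd K X x} :=
          mem_span_words (tail_supp hhom hg)
        refine conj_span_le (wd K X u) (wd K X t * g₁ * wd K X v₁) ?_ _ hspan
        rintro x ⟨y, ⟨hylt, hyl⟩, rfl⟩
        have hassoc : wd K X u * wd K X y * (wd K X t * g₁ * wd K X v₁)
            = wd K X (u * (y * t)) * g₁ * wd K X v₁ := by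
          simp only [← wd_mul]
          noncomm_ring
        rw [hassoc]
        apply conj_mem_Mgen hhom hg₁
        · conv_rhs => rw [hv]
          simp only [wlen_mul, hyl, hlg₁, hlg]
          omega
        · show u * (y * t) * lm K X g₁ * v₁ < u * lm K X g * v
          have h5 : u * y * (t * (lm K X g₁ * v₁)) < u * lm K X g * (t * (lm K X g₁ * v₁)) :=
            mul_lt_mul_words hylt (by rw [hyl, hlg]) u _ _
          have e1 : u * y * (t * (lm K X g₁ * v₁)) = u * (y * t) * lm K X g₁ * v₁ := by
            apply fm_ext; simp [FreeMonoid.toList_mul, List.append_assoc]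
          have e2 : u * lm K X g * (t * (lm K X g₁ * v₁)) = u * lm K X g * v := by
            rw [hv]
          rwa [e1, e2] at h5

include hN hhom hred hside in
lemma resolve {u v u₁ v₁ : FreeMonoid X} {g g₁ : F K X} (hg : g ∈ R) (hg₁ : g₁ ∈ R)
    (heqw : u * lm K X g * v = u₁ * lm K X g₁ * v₁) :
    wd K X u * g * wd K X v - wd K X u₁ * g₁ * wd K X v₁
      ∈ Mgen R (wlen X (u * lm K X g * v)) (· < u * lm K X g * v) := by
  rcases le_total (wlen X u) (wlen X u₁) with h | h
  · exact resolve_le hN hhom hred hside hg hg₁ heqw h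
  · have h2 := resolve_le hN hhom hred hside hg₁ hg heqw.symm h
    rw [← heqw] at h2
    have h3 := Submodule.neg_mem _ h2
    rwa [neg_sub] at h3

end Resolve

end CC

namespace CC

variable {K : Type*} [Field K] {X : Type*} [Fintype X] [LinearOrder X]
variable {N : ℕ} {R : Set (F K X)}

/-- number of words of length `d` smaller than `w`. -/
noncomputable def mu (d : ℕ) (w : FreeMonoid X) : ℕ :=
  (@Finset.filter _ (fun tup : Fin d → X => List.ofFn tup < FreeMonoid.toList w)
    (Classical.decPred _) Finset.univ).card

lemma mu_lt {w w' : FreeMonoid X} (hl : wlen X w' = wlen X w) (h : w' < w) :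
    mu (wlen X w) w' < mu (wlen X w) w := by
  classical
  set d := wlen X w with hd
  have hlen : (FreeMonoid.toList w').length = d := hl
  apply Finset.card_lt_card
  rw [Finset.ssubset_iff_of_subset]
  · refine ⟨fun i : Fin d => (FreeMonoid.toList w').get (Fin.cast hlen.symm i), ?_, ?_⟩
    · have : List.ofFn (fun i : Fin d => (FreeMonoid.toList w').get (Fin.cast hlen.symm i))
          = FreeMonoid.toList w' := by
        apply List.ext_getElem
        · simp [hlen]
        · intro i h1 h2
          simp [List.getElem_ofFn]
      simp only [Finset.mem_filter, Finset.mem_univ, true_and]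
      rw [this]
      exact h
    · intro hmem
      simp only [Finset.mem_filter, Finset.mem_univ, true_and] at hmem
      have : List.ofFn (fun i : Fin d => (FreeMonoid.toList w').get (Fin.cast hlen.symm i))
          = FreeMonoid.toList w' := by
        apply List.ext_getElem
        · simp [hlen]
        · intro i h1 h2
          simp [List.getElem_ofFn]
      rw [this] at hmem
      exact lt_irrefl _ hmem
  · intro tup htup
    simp only [Finset.mem_filter, Finset.mem_univ, true_and] at htup ⊢
    exact lt_trans htup h

section Star

variable (hN : 2 ≤ N) (hhom : NHomogLC1 K X N R) (hred : Reduced K X R)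
variable (hside : SideConfluent K X N R)
variable {phi : F K X →ₗ[K] F K X}

include hN hhom hred hside in
lemma star (hphi : ∀ f : F K X, NormalFormOf K X R f (phi f)) :
    ∀ u v : FreeMonoid X, ∀ g ∈ R, phi (wd K X u * g * wd K X v) = 0 := by
  suffices h : ∀ n : ℕ, ∀ w : FreeMonoid X, mu (wlen X w) w = n →
      ∀ u v : FreeMonoid X, ∀ g ∈ R, u * lm K X g * v = w →
        phi (wd K X u * g * wd K X v) = 0 by
    intro u v g hg
    exact h _ _ rfl u v g hg rfl
  intro n
  induction n using Nat.strong_induction_on with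
  | _ n ih =>
    intro w hmu u v g hg hw
    set d := wlen X w with hd
    have hMker : ∀ x ∈ Mgen R d (· < w), phi x = 0 := by
      have hle : Mgen R d (· < w) ≤ LinearMap.ker phi := by
        rw [Mgen, Submodule.span_le]
        rintro x ⟨u', g', v', hg', hlen', hlt', rfl⟩
        rw [SetLike.mem_coe, LinearMap.mem_ker]
        have hmulen : wlen X (u' * lm K X g' * v') = wlen X w := hlen'
        have hmlt : mu (wlen X (u' * lm K X g' * v')) (u' * lm K X g' * v') < n := by
          rw [hmulen, ← hmu]
          exact mu_lt hmulen hlt'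
        exact ih _ hmlt (u' * lm K X g' * v') rfl u' v' g' hg' rfl
      intro x hx
      exact LinearMap.mem_ker.mp (hle hx)
    -- the invariant
    set P : F K X → Prop := fun y => y = wd K X w ∨
      ∃ u₁ g₁ v₁, g₁ ∈ R ∧ u₁ * lm K X g₁ * v₁ = w ∧
        wd K X w - y - wd K X u₁ * g₁ * wd K X v₁ ∈ Mgen R d (· < w) ∧
        y ∈ degSub K X d ∧ ∀ x ∈ y.coeff.support, x < w with hP
    have hstep : ∀ u' v' : FreeMonoid X, ∀ g' ∈ R, ∀ y, P y → P (redMap K X u' g' v' y) := by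
      intro u' v' g' hg' y hy
      rcases hy with rfl | ⟨u₁, g₁, v₁, hg₁, hw₁, hm₁, hdeg₁, hsupp₁⟩
      · rw [redMap_apply, wd_apply]
        by_cases hc : u' * lm K X g' * v' = w
        · rw [if_pos hc, one_smul]
          right
          refine ⟨u', g', v', hg', hc, ?_, ?_, ?_⟩
          · have hzero : wd K X w - (wd K X w - wd K X u' * g' * wd K X v')
                - wd K X u' * g' * wd K X v' = 0 := by abel
            rw [hzero]
            exact Submodule.zero_mem _
          · exact Submodule.sub_mem _ (wd_mem_degSub hd.symm)
              (conj_degSub hhom hg' (by rw [hc, ← hd]))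
          · have hrw : wd K X w - wd K X u' * g' * wd K X v'
                = wd K X u' * (wd K X (lm K X g') - g') * wd K X v' := by
              rw [← hc]
              simp only [← wd_mul]
              noncomm_ring
            intro x hx
            rw [hrw, conj_support] at hx
            obtain ⟨x₀, hx₀, rfl⟩ := Finset.mem_image.mp hx
            obtain ⟨hx₀lt, hx₀len⟩ := tail_supp hhom hg' x₀ hx₀
            have : u' * x₀ * v' < u' * lm K X g' * v' :=
              mul_lt_mul_words hx₀lt (by rw [hx₀len, wlen_lm hhom hg']) u' v' v'
            rwa [hc] at this
        · rw [if_neg hc, zero_smul, sub_zero]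
          left; rfl
      · rw [redMap_apply]
        by_cases hc : y.coeff (u' * lm K X g' * v') = 0
        · rw [hc, zero_smul, sub_zero]
          right
          exact ⟨u₁, g₁, v₁, hg₁, hw₁, hm₁, hdeg₁, hsupp₁⟩
        · have hwmem : u' * lm K X g' * v' ∈ y.coeff.support := Finsupp.mem_support_iff.mpr hc
          have hwlt : u' * lm K X g' * v' < w := hsupp₁ _ hwmem
          have hwd : wlen X (u' * lm K X g' * v') = d := hdeg₁ _ hwmem
          have hconj : wd K X u' * g' * wd K X v' ∈ Mgen R d (· < w) :=
            conj_mem_Mgen hhom hg' hwd hwlt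
          right
          refine ⟨u₁, g₁, v₁, hg₁, hw₁, ?_, ?_, ?_⟩
          · have : wd K X w - (y - y.coeff (u' * lm K X g' * v') • (wd K X u' * g' * wd K X v'))
                - wd K X u₁ * g₁ * wd K X v₁
                = (wd K X w - y - wd K X u₁ * g₁ * wd K X v₁)
                  + y.coeff (u' * lm K X g' * v') • (wd K X u' * g' * wd K X v') := by
              abel
            rw [this]
            exact Submodule.add_mem _ hm₁ (Submodule.smul_mem _ _ hconj)
          · exact Submodule.sub_mem _ hdeg₁
              (Submodule.smul_mem _ _ (conj_degSub hhom hg' hwd))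
          · intro x hx
            rcases Finset.mem_union.mp (Finsupp.support_sub hx) with h1 | h1
            · exact hsupp₁ x h1
            · have h2 : x ∈ (wd K X u' * g' * wd K X v').coeff.support := Finsupp.support_smul h1
              have h2' := h2
              rw [conj_support] at h2'
              obtain ⟨x₀, hx₀, rfl⟩ := Finset.mem_image.mp h2'
              have : u' * x₀ * v' ≤ u' * lm K X g' * v' :=
                mul_le_mul_words (le_lm hx₀)
                  (by rw [(hhom g' hg').1 x₀ hx₀, wlen_lm hhom hg']) u' v'
              exact lt_of_le_of_lt this hwlt
    obtain ⟨hnf, L, hL, hfold⟩ := hphi (wd K X w)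
    have hPphi : P (phi (wd K X w)) := by
      rw [hfold]
      exact foldr_pres P hstep L hL (Or.inl rfl)
    rcases hPphi with heq | ⟨u₁, g₁, v₁, hg₁, hw₁, hm₁, -, -⟩
    · exfalso
      rw [heq] at hnf
      exact (wd_isNormalForm_iff hhom).mp hnf u v g hg hw.symm
    · have h0 := hMker _ hm₁
      rw [map_sub, map_sub, phi_idem hphi] at h0
      have hphi₁ : phi (wd K X u₁ * g₁ * wd K X v₁) = 0 := by
        rw [sub_self, zero_sub] at h0
        exact neg_eq_zero.mp h0
      have hres := resolve hN hhom hred hside hg hg₁ (hw.trans hw₁.symm)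
      rw [hw] at hres
      have h2 := hMker _ hres
      rw [map_sub, hphi₁, sub_zero] at h2
      exact h2

end Star

end CC

namespace CC

variable {K : Type*} [Field K] {X : Type*} [Fintype X] [LinearOrder X]
variable {N : ℕ} {R : Set (F K X)}

lemma span_R_le_degSub (hhom : NHomogLC1 K X N R) :
    Submodule.span K R ≤ degSub K X N :=
  Submodule.span_le.mpr (fun g hg => (hhom g hg).1)

lemma idealPiece_le_degSub (hhom : NHomogLC1 K X N R) (a : ℕ) :
    idealPiece K X N R a ≤ degSub K X a := by
  rw [idealPiece]
  by_cases h : a < N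
  · rw [if_pos h]; exact bot_le
  · rw [if_neg h]
    apply iSup₂_le
    intro i hi
    rw [Finset.mem_range] at hi
    have h1 : degSub K X i * Submodule.span K R ≤ degSub K X (i + N) :=
      Submodule.mul_le.mpr (fun p hp q hq => mul_mem_degSub hp (span_R_le_degSub hhom hq))
    apply Submodule.mul_le.mpr
    intro x hx y hy
    have h3 := mul_mem_degSub (h1 hx) hy
    have harith : i + N + (a - N - i) = a := by omega
    rwa [harith] at h3

lemma Mgen_le_idealPiece (hhom : NHomogLC1 K X N R) (a : ℕ) :
    Mgen R a (fun _ => True) ≤ idealPiece K X N R a := by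
  rw [Mgen, Submodule.span_le]
  rintro x ⟨u, g, v, hg, hlen, -, rfl⟩
  have hul : wlen X u + N + wlen X v = a := by
    rw [← hlen, wlen_mul, wlen_mul, wlen_lm hhom hg]
  have hNa : ¬ a < N := by omega
  rw [SetLike.mem_coe, idealPiece, if_neg hNa]
  apply Submodule.mem_iSup_of_mem (wlen X u)
  apply Submodule.mem_iSup_of_mem (Finset.mem_range.mpr (by omega))
  have hv : wlen X v = a - N - wlen X u := by omega
  exact Submodule.mul_mem_mul
    (Submodule.mul_mem_mul (wd_mem_degSub rfl) (Submodule.subset_span hg))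
    (wd_mem_degSub hv)

section PhiKer

variable (hN : 2 ≤ N) (hhom : NHomogLC1 K X N R) (hred : Reduced K X R)
variable (hside : SideConfluent K X N R)
variable {phi : F K X →ₗ[K] F K X} (hphi : ∀ f : F K X, NormalFormOf K X R f (phi f))

include hN hhom hred hside hphi in
lemma idealPiece_le_ker (a : ℕ) :
    idealPiece K X N R a ≤ LinearMap.ker phi := by
  rw [idealPiece]
  by_cases h : a < N
  · rw [if_pos h]; exact bot_le
  · rw [if_neg h]
    apply iSup₂_le
    intro i hi
    rw [degSub_eq_span, degSub_eq_span, Submodule.span_mul_span, Submodule.span_mul_span,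
      Submodule.span_le]
    rintro x hx
    rw [Set.mem_mul] at hx
    obtain ⟨y, hy, z, hz, rfl⟩ := hx
    rw [Set.mem_mul] at hy
    obtain ⟨p, hp, g, hgR, rfl⟩ := hy
    obtain ⟨u, hu, rfl⟩ := hp
    obtain ⟨v, hv, rfl⟩ := hz
    rw [SetLike.mem_coe, LinearMap.mem_ker]
    exact star hN hhom hred hside hphi u v g hgR

include hN hhom hred hside hphi in
lemma ker_phi_deg {a : ℕ} {f : F K X} (hf : f ∈ degSub K X a) (h0 : phi f = 0) :
    f ∈ idealPiece K X N R a := by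
  have h1 := sub_phi_mem hhom hphi hf
  rw [h0, sub_zero] at h1
  exact Mgen_le_idealPiece hhom a h1

include hN hhom hred hside hphi in
lemma phi_deg_ker_iff {a : ℕ} {f : F K X} (hf : f ∈ degSub K X a) :
    phi f = 0 ↔ f ∈ idealPiece K X N R a := by
  constructor
  · intro h; exact ker_phi_deg hN hhom hred hside hphi hf h
  · intro h
    exact LinearMap.mem_ker.mp (idealPiece_le_ker hN hhom hred hside hphi a h)

end PhiKer

/-- `applyLeft T a b` on a product of homogeneous elements. -/
lemma applyLeft_prod (T : F K X →ₗ[K] F K X) {a b : ℕ} {p q : F K X}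
    (hp : p ∈ degSub K X a) (hq : q ∈ degSub K X b) :
    applyLeft K X T a b (p * q) = T p * q := by
  rw [degSub_eq_span] at hp hq
  induction hp using Submodule.span_induction with
  | mem x hx =>
      obtain ⟨u, hu, rfl⟩ := hx
      induction hq using Submodule.span_induction with
      | mem y hy =>
          obtain ⟨v, hv, rfl⟩ := hy
          rw [wd_mul]
          exact applyLeft_mul_wd T u v hu hv
      | zero => simp
      | add y z hy hz ihy ihz => rw [mul_add, map_add, ihy, ihz, mul_add]
      | smul c y hy ihy => rw [mul_smul_comm, map_smul, ihy, mul_smul_comm]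
  | zero => simp
  | add y z hy hz ihy ihz => rw [add_mul, map_add, ihy, ihz, map_add, add_mul]
  | smul c y hy ihy => rw [smul_mul_assoc, map_smul, ihy, map_smul, smul_mul_assoc]

lemma applyLeft_offdeg (T : F K X →ₗ[K] F K X) (a b : ℕ) {f : F K X}
    (hf : ∀ w ∈ f.coeff.support, wlen X w ≠ a + b) : applyLeft K X T a b f = f := by
  conv_lhs => rw [F_eq_sum f]
  rw [map_finsuppSum]
  conv_rhs => rw [F_eq_sum f]
  apply Finsupp.sum_congr
  intro w hw
  rw [map_smul, applyLeft_wd, if_neg (hf w hw)]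

lemma applyLeft_degSub {T : F K X →ₗ[K] F K X}
    {a b : ℕ} {f : F K X}
    (hTdeg : ∀ p, p ∈ degSub K X a → T p ∈ degSub K X a)
    (hf : f ∈ degSub K X (a + b)) : applyLeft K X T a b f ∈ degSub K X (a + b) := by
  rw [degSub_eq_span] at hf
  induction hf using Submodule.span_induction with
  | mem x hx =>
      obtain ⟨w, hw, rfl⟩ := hx
      rw [applyLeft_wd, if_pos hw]
      have h1 : wlen X (FreeMonoid.ofList ((FreeMonoid.toList w).take a)) = a := by
        show ((FreeMonoid.toList w).take a).length = a
        have : (FreeMonoid.toList w).length = a + b := hw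
        rw [List.length_take]
        omega
      have h2 : wlen X (FreeMonoid.ofList ((FreeMonoid.toList w).drop a)) = b := by
        show ((FreeMonoid.toList w).drop a).length = b
        have : (FreeMonoid.toList w).length = a + b := hw
        rw [List.length_drop]
        omega
      exact mul_mem_degSub (hTdeg _ (wd_mem_degSub h1)) (wd_mem_degSub h2)
  | zero => simp [Submodule.zero_mem]
  | add y z hy hz ihy ihz => rw [map_add]; exact Submodule.add_mem _ ihy ihz
  | smul c y hy ihy => rw [map_smul]; exact Submodule.smul_mem _ _ ihy

lemma degSub_zero_eq_one : (degSub K X 0 : Submodule K (F K X)) = 1 := by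
  rw [Submodule.one_eq_span]
  apply le_antisymm
  · intro f hf
    have : ∀ w ∈ f.coeff.support, (fun x => x = (1 : FreeMonoid X)) w := by
      intro w hw
      have := hf w hw
      have h1 : FreeMonoid.toList w = [] := List.length_eq_zero_iff.mp this
      exact fm_ext h1
    have h2 := mem_span_words (K := K) this
    have hset : ({1} : Set (F K X)) = {y | ∃ w, w = 1 ∧ y = wd K X w} := by
      ext y
      constructor
      · rintro rfl; exact ⟨1, rfl, (wd_one).symm⟩
      · rintro ⟨w, rfl, rfl⟩; exact wd_one
    rw [hset]
    exact h2
  · rw [Submodule.span_le]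
    rintro y hy
    rw [Set.mem_singleton_iff] at hy
    subst hy
    rw [← wd_one (K := K) (X := X)]
    exact wd_mem_degSub rfl

lemma mul_degSub_zero (P : Submodule K (F K X)) : P * degSub K X 0 = P := by
  rw [degSub_zero_eq_one, mul_one]

end CC

namespace CC

variable {K : Type*} [Field K] {X : Type*} [Fintype X] [LinearOrder X]
variable {N : ℕ} {R : Set (F K X)}

open Classical in
/-- extract the coefficient-prefix of the words ending with `v`. -/
noncomputable def cut (a : ℕ) (v : FreeMonoid X) : F K X →ₗ[K] F K X :=
  Finsupp.linearCombination K (fun w : FreeMonoid X =>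
    if FreeMonoid.ofList ((FreeMonoid.toList w).drop a) = v ∧ wlen X w = a + wlen X v
    then wd K X (FreeMonoid.ofList ((FreeMonoid.toList w).take a)) else 0) ∘ₗ
    ((MonoidAlgebra.coeffLinearEquiv (R := K) : F K X ≃ₗ[K] (FreeMonoid X →₀ K)).toLinearMap)

lemma cut_wd (a : ℕ) (v w : FreeMonoid X) :
    cut a v (wd K X w) =
      if FreeMonoid.ofList ((FreeMonoid.toList w).drop a) = v ∧ wlen X w = a + wlen X v
      then wd K X (FreeMonoid.ofList ((FreeMonoid.toList w).take a)) else 0 := by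
  rw [cut]
  exact lc_wd _ w

lemma cut_mul_wd {a b : ℕ} {u v : FreeMonoid X} (hu : wlen X u = a) (hv : wlen X v = b) :
    cut a v (wd K X (u * v)) = wd K X u := by
  rw [cut_wd, if_pos, take_mul u v hu]
  refine ⟨drop_mul u v hu, ?_⟩
  rw [wlen_mul, hu]

lemma cut_mul_wd_ne {a b : ℕ} {u v v' : FreeMonoid X} (hu : wlen X u = a)
    (hv : wlen X v = b) (hv' : wlen X v' = b) (hne : v' ≠ v) :
    cut a v' (wd K X (u * v)) = 0 := by
  rw [cut_wd, if_neg]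
  rintro ⟨h1, -⟩
  rw [drop_mul u v hu] at h1
  exact hne h1.symm

lemma cut_degSub (a : ℕ) (v : FreeMonoid X) (f : F K X) :
    cut a v f ∈ degSub K X a := by
  induction f using MonoidAlgebra.induction_linear with
  | zero => simp [Submodule.zero_mem]
  | add f h hf hh => rw [map_add]; exact Submodule.add_mem _ hf hh
  | single w c =>
      have : (MonoidAlgebra.single w c : F K X) = c • wd K X w := by
        rw [wd_def, MonoidAlgebra.smul_single, smul_eq_mul, mul_one]
      rw [this, map_smul]
      apply Submodule.smul_mem
      rw [cut_wd]
      by_cases h : FreeMonoid.ofList ((FreeMonoid.toList w).drop a) = v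
          ∧ wlen X w = a + wlen X v
      · rw [if_pos h]
        apply wd_mem_degSub
        show ((FreeMonoid.toList w).take a).length = a
        have : (FreeMonoid.toList w).length = a + wlen X v := h.2
        rw [List.length_take]
        omega
      · rw [if_neg h]
        exact Submodule.zero_mem _

/-- the finset of all words of length `b`. -/
noncomputable def Wb (X : Type*) [Fintype X] [LinearOrder X] (b : ℕ) :
    Finset (FreeMonoid X) :=
  Finset.image (fun tup : Fin b → X => FreeMonoid.ofList (List.ofFn tup)) Finset.univ

lemma mem_Wb {b : ℕ} {v : FreeMonoid X} : v ∈ Wb X b ↔ wlen X v = b := by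
  constructor
  · rintro hv
    obtain ⟨tup, -, rfl⟩ := Finset.mem_image.mp hv
    show (FreeMonoid.toList (FreeMonoid.ofList (List.ofFn tup))).length = b
    simp
  · intro hv
    apply Finset.mem_image.mpr
    have hlen : (FreeMonoid.toList v).length = b := hv
    refine ⟨fun i => (FreeMonoid.toList v).get (Fin.cast hlen.symm i), Finset.mem_univ _, ?_⟩
    apply fm_ext
    show List.ofFn (fun i => (FreeMonoid.toList v).get (Fin.cast hlen.symm i))
      = FreeMonoid.toList v
    apply List.ext_getElem
    · simp [hlen]
    · intro i h1 h2
      simp [List.getElem_ofFn]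

lemma sum_cut {a b : ℕ} {f : F K X} (hf : f ∈ degSub K X (a + b)) :
    f = ∑ v ∈ Wb X b, cut a v f * wd K X v := by
  rw [degSub_eq_span] at hf
  induction hf using Submodule.span_induction with
  | mem x hx =>
      obtain ⟨w, hw, rfl⟩ := hx
      have hwl : (FreeMonoid.toList w).length = a + b := hw
      set u := FreeMonoid.ofList ((FreeMonoid.toList w).take a) with hu
      set v₀ := FreeMonoid.ofList ((FreeMonoid.toList w).drop a) with hv₀
      have hul : wlen X u = a := by
        show ((FreeMonoid.toList w).take a).length = a
        rw [List.length_take]; omega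
      have hv₀l : wlen X v₀ = b := by
        show ((FreeMonoid.toList w).drop a).length = b
        rw [List.length_drop]; omega
      have hw2 : w = u * v₀ := by
        apply fm_ext
        simp [FreeMonoid.toList_mul, hu, hv₀]
      rw [Finset.sum_eq_single v₀]
      · rw [hw2, cut_mul_wd hul hv₀l, wd_mul]
      · intro v hv hne
        rw [hw2, cut_mul_wd_ne hul hv₀l (mem_Wb.mp hv) hne, zero_mul]
      · intro hnotin
        exact absurd (mem_Wb.mpr hv₀l) hnotin
  | zero => simp
  | add y z hy hz ihy ihz =>
      conv_lhs => rw [ihy, ihz]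
      rw [← Finset.sum_add_distrib]
      apply Finset.sum_congr rfl
      intro v hv
      rw [map_add, add_mul]
  | smul c y hy ihy =>
      conv_lhs => rw [ihy]
      rw [Finset.smul_sum]
      apply Finset.sum_congr rfl
      intro v hv
      rw [map_smul, smul_mul_assoc]

lemma components_zero {a b : ℕ} (G : FreeMonoid X → F K X)
    (hG : ∀ v, G v ∈ degSub K X a)
    (h : ∑ v ∈ Wb X b, G v * wd K X v = 0) : ∀ v ∈ Wb X b, G v = 0 := by
  intro v₀ hv₀
  apply MonoidAlgebra.coeff_injective
  apply Finsupp.ext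
  intro p
  rw [MonoidAlgebra.coeff_zero, Finsupp.coe_zero, Pi.zero_apply]
  by_cases hp : wlen X p = a
  · have heval := congrArg (fun q : F K X => q.coeff (p * v₀)) h
    simp only [MonoidAlgebra.coeff_zero, Finsupp.coe_zero, Pi.zero_apply] at heval
    rw [MonoidAlgebra.coeff_sum, Finsupp.finset_sum_apply] at heval
    rw [Finset.sum_eq_single v₀] at heval
    · rw [← heval]
      have h1 : G v₀ * wd K X v₀ = wd K X 1 * G v₀ * wd K X v₀ := by rw [wd_one, one_mul]
      have h2 : p * v₀ = 1 * p * v₀ := by rw [one_mul]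
      rw [h1, h2, conj_apply]
    · intro v hv hne
      have h1 : G v * wd K X v = wd K X 1 * G v * wd K X v := by rw [wd_one, one_mul]
      rw [h1, conj_eq]
      apply Finsupp.mapDomain_of_notMem_range
      rintro ⟨x, hx⟩
      simp only [one_mul] at hx
      have hx2 := congrArg (fun y : FreeMonoid X => FreeMonoid.toList y) hx
      simp only [FreeMonoid.toList_mul] at hx2
      have hvl : (FreeMonoid.toList v).length = (FreeMonoid.toList v₀).length := by
        have e1 : (FreeMonoid.toList v).length = b := mem_Wb.mp hv
        have e2 : (FreeMonoid.toList v₀).length = b := mem_Wb.mp hv₀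
        omega
      obtain ⟨-, h4⟩ := List.append_inj' hx2 hvl
      exact hne (fm_ext h4)
    · intro hnot
      exact absurd hv₀ hnot
  · by_contra hne
    exact hp ((hG v₀) p (Finsupp.mem_support_iff.mpr hne))

end CC

namespace CC

variable {K : Type*} [Field K] {X : Type*} [Fintype X] [LinearOrder X]
variable {N : ℕ} {R : Set (F K X)}

section Main

variable (hN : 2 ≤ N) (hhom : NHomogLC1 K X N R) (hred : Reduced K X R)
variable (hside : SideConfluent K X N R)
variable {phi : F K X →ₗ[K] F K X} (hphi : ∀ f : F K X, NormalFormOf K X R f (phi f))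

include hN hhom hred hside hphi in
lemma main_redop {a b m : ℕ} (hab : a + b = m) :
    IsRedOp K X m (applyLeft K X phi a b) ∧
      LinearMap.ker (applyLeft K X phi a b) = idealPiece K X N R a * degSub K X b := by
  classical
  have hTdeg : ∀ p, p ∈ degSub K X a → phi p ∈ degSub K X a :=
    fun p hp => phi_degSub hhom hphi hp
  -- action on a word of length m : split it
  have hsplit : ∀ w : FreeMonoid X, wlen X w = m →
      ∃ u v : FreeMonoid X, w = u * v ∧ wlen X u = a ∧ wlen X v = b ∧
        applyLeft K X phi a b (wd K X w) = phi (wd K X u) * wd K X v := by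
    intro w hw
    have hwl : (FreeMonoid.toList w).length = m := hw
    refine ⟨FreeMonoid.ofList ((FreeMonoid.toList w).take a),
      FreeMonoid.ofList ((FreeMonoid.toList w).drop a), ?_, ?_, ?_, ?_⟩
    · apply fm_ext; simp [FreeMonoid.toList_mul]
    · show ((FreeMonoid.toList w).take a).length = a
      rw [List.length_take]; omega
    · show ((FreeMonoid.toList w).drop a).length = b
      rw [List.length_drop]; omega
    · rw [applyLeft_wd, if_pos (by rw [hw, hab])]
  have hTT : ∀ w : FreeMonoid X,
      applyLeft K X phi a b (applyLeft K X phi a b (wd K X w))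
        = applyLeft K X phi a b (wd K X w) := by
    intro w
    by_cases hw : wlen X w = m
    · obtain ⟨u, v, hw2, hu, hv, happ⟩ := hsplit w hw
      rw [happ, applyLeft_prod phi (hTdeg _ (wd_mem_degSub hu)) (wd_mem_degSub hv),
        phi_idem hphi]
    · rw [applyLeft_wd, if_neg (by rw [hab]; exact hw), applyLeft_wd,
        if_neg (by rw [hab]; exact hw)]
  have happlin : ∀ f : F K X, applyLeft K X phi a b f
      = f.coeff.sum fun w c => c • applyLeft K X phi a b (wd K X w) := by
    intro f
    conv_lhs => rw [F_eq_sum f]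
    rw [map_finsuppSum]
    exact Finsupp.sum_congr (fun w _ => map_smul _ _ _)
  have hredop : IsRedOp K X m (applyLeft K X phi a b) := by
    constructor
    · -- idempotent
      apply LinearMap.ext
      intro f
      rw [LinearMap.comp_apply, happlin f, map_finsuppSum]
      apply Finsupp.sum_congr
      intro w _
      rw [map_smul, hTT w]
    · -- le
      intro w hw
      obtain ⟨u, v, hw2, hu, hv, happ⟩ := hsplit w hw
      by_cases hn : IsNormalForm K X R (wd K X u)
      · left
        rw [happ, phi_fix hphi hn, wd_mul, ← hw2]
      · right
        constructor
        · rw [happ, ← hab]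
          exact mul_mem_degSub (hTdeg _ (wd_mem_degSub hu)) (wd_mem_degSub hv)
        · intro x hx
          rw [happ] at hx
          have hinv := phi_invariant hhom hphi (P := fun x => x ≤ u)
            (fun x y _ _ hxy hy => le_trans hxy hy)
            ⟨wd_mem_degSub hu, by
              intro x hxs
              rw [supp_wd, Finset.mem_singleton] at hxs
              rw [hxs]⟩
          obtain ⟨⟨hdeg, hle⟩, -⟩ := hinv
          have h1 : phi (wd K X u) * wd K X v = wd K X 1 * phi (wd K X u) * wd K X v := by
            rw [wd_one, one_mul]
          rw [h1, conj_support] at hx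
          obtain ⟨x₀, hx₀, rfl⟩ := Finset.mem_image.mp hx
          have hx₀n : IsNormalForm K X R (wd K X x₀) :=
            supp_normal hhom (phi_normal hphi (wd K X u)) hx₀
          have hx₀ne : x₀ ≠ u := by
            rintro rfl
            exact hn hx₀n
          have hx₀lt : x₀ < u := lt_of_le_of_ne (hle x₀ hx₀) hx₀ne
          have h5 : (1 : FreeMonoid X) * x₀ * v < 1 * u * v :=
            mul_lt_mul_words hx₀lt (by rw [hdeg x₀ hx₀, hu]) 1 v v
          rwa [show (1 : FreeMonoid X) * u * v = w by rw [one_mul, ← hw2]] at h5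
    · -- other
      intro w hw
      rw [applyLeft_wd, if_neg (by rw [hab]; exact hw)]
  refine ⟨hredop, ?_⟩
  apply le_antisymm
  · -- ker ≤ ideal ⊗ V
    intro f hf
    rw [LinearMap.mem_ker] at hf
    set f₁ : F K X := MonoidAlgebra.ofCoeff (f.coeff.filter (fun w => wlen X w = m)) with hf₁def
    set f₂ : F K X := MonoidAlgebra.ofCoeff (f.coeff.filter (fun w => ¬ wlen X w = m))
      with hf₂def
    have hsum : f₁ + f₂ = f :=
      MonoidAlgebra.coeff_injective (Finsupp.filter_pos_add_filter_neg f.coeff _)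
    have hm₁ : f₁ ∈ degSub K X m := by
      intro w hw
      rw [hf₁def, MonoidAlgebra.coeff_ofCoeff, Finsupp.support_filter, Finset.mem_filter] at hw
      exact hw.2
    have hm₂ : ∀ w ∈ f₂.coeff.support, wlen X w ≠ m := by
      intro w hw
      rw [hf₂def, MonoidAlgebra.coeff_ofCoeff, Finsupp.support_filter, Finset.mem_filter] at hw
      exact hw.2
    have hT2 : applyLeft K X phi a b f₂ = f₂ :=
      applyLeft_offdeg phi a b (fun w hw => by rw [hab]; exact hm₂ w hw)
    have hT1deg : applyLeft K X phi a b f₁ ∈ degSub K X m := by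
      have := applyLeft_degSub (T := phi) hTdeg (by rw [hab]; exact hm₁)
      rwa [hab] at this
    have hTf : applyLeft K X phi a b f₁ + f₂ = 0 := by
      have h9 : applyLeft K X phi a b (f₁ + f₂) = applyLeft K X phi a b f := by rw [hsum]
      rw [map_add, hT2] at h9
      rw [h9]
      exact hf
    have hf₂0 : f₂ = 0 := by
      have h2 : f₂ = -(applyLeft K X phi a b f₁) := by
        rw [eq_neg_iff_add_eq_zero, add_comm]
        exact hTf
      apply MonoidAlgebra.coeff_eq_zero.mp
      apply Finsupp.support_eq_empty.mp
      by_contra hne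
      obtain ⟨w, hw⟩ := Finset.nonempty_iff_ne_empty.mpr hne
      apply hm₂ w hw
      have : w ∈ (applyLeft K X phi a b f₁).coeff.support := by
        rw [h2, MonoidAlgebra.coeff_neg, Finsupp.support_neg] at hw
        exact hw
      exact hT1deg w this
    have hff₁ : f = f₁ := by rw [← hsum, hf₂0, add_zero]
    have hfdeg : f ∈ degSub K X m := hff₁ ▸ hm₁
    have hTf0 : applyLeft K X phi a b f = 0 := hf
    -- decompose along suffixes
    have hdecomp : f = ∑ v ∈ Wb X b, cut a v f * wd K X v :=
      sum_cut (by rw [hab]; exact hfdeg)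
    have hTsum : ∑ v ∈ Wb X b, phi (cut a v f) * wd K X v = 0 := by
      rw [← hTf0]
      conv_rhs => rw [hdecomp]
      rw [map_sum]
      apply Finset.sum_congr rfl
      intro v hv
      rw [applyLeft_prod phi (cut_degSub a v f) (wd_mem_degSub (mem_Wb.mp hv))]
    have hcomp := components_zero (fun v => phi (cut a v f))
      (fun v => hTdeg _ (cut_degSub a v f)) hTsum
    rw [hdecomp]
    apply Submodule.sum_mem
    intro v hv
    apply Submodule.mul_mem_mul
    · exact ker_phi_deg hN hhom hred hside hphi (cut_degSub a v f) (hcomp v hv)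
    · exact wd_mem_degSub (mem_Wb.mp hv)
  · -- ideal ⊗ V ≤ ker
    apply Submodule.mul_le.mpr
    intro p hp q hq
    rw [LinearMap.mem_ker,
      applyLeft_prod phi (idealPiece_le_degSub hhom a hp) hq]
    have h0 : phi p = 0 :=
      LinearMap.mem_ker.mp (idealPiece_le_ker hN hhom hred hside hphi a hp)
    rw [h0, zero_mul]

end Main

end CC


open CC in
/-- Suppose the reduced `N`-homogeneous presentation `⟨X|R⟩` is
side-confluent and let `φ : K⟨X⟩ → K⟨X⟩` be the linear map sending each element to its unique
normal form.  Then for all `n ≥ 0` and `m ≥ l_N(n)`, the operator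
`φ|_{V^{⊗m−l_N(n)}} ⊗ id_{V^{⊗l_N(n)}}` is a reduction operator relative to `X^{(m)}` whose
kernel equals `I(R)_{m−l_N(n)} ⊗ V^{⊗l_N(n)}`; hence it equals `F_1^{n,m}`.  In particular
(case `n = 0`), the restriction of `φ` to `V^{⊗m}` is a reduction operator relative to
`X^{(m)}` with kernel `I(R)_m`. -/
theorem stmt15 (K : Type*) [Field K] (X : Type*) [Fintype X] [LinearOrder X]
    (N : ℕ) (hN : 2 ≤ N) (R : Set (F K X))
    (hhom : NHomogLC1 K X N R) (hred : Reduced K X R)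
    (hside : SideConfluent K X N R)
    (phi : F K X →ₗ[K] F K X) (hphi : ∀ f : F K X, NormalFormOf K X R f (phi f)) :
    (∀ n m : ℕ, lN N n ≤ m →
      IsRedOp K X m (applyLeft K X phi (m - lN N n) (lN N n)) ∧
      LinearMap.ker (applyLeft K X phi (m - lN N n) (lN N n)) = ker1 K X N R n m) ∧
    (∀ m : ℕ,
      IsRedOp K X m (applyLeft K X phi m 0) ∧
      LinearMap.ker (applyLeft K X phi m 0) = idealPiece K X N R m) := by
  constructor
  · intro n m hnm
    have hab : (m - lN N n) + lN N n = m := by omega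
    obtain ⟨h1, h2⟩ := main_redop hN hhom hred hside hphi hab
    exact ⟨h1, by rw [h2, ker1]⟩
  · intro m
    have hab : m + 0 = m := rfl
    obtain ⟨h1, h2⟩ := main_redop hN hhom hred hside hphi hab
    exact ⟨h1, by rw [h2, mul_degSub_zero]⟩
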